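/- arXiv:1802.03425 — 6 statements merged into one kernel-verified Lean document; each statement's English description precedes it below -/
import Mathlib

section
/- Let P and Q be probability measures on a measurable space with densities p, q with respect to a common σ-finite dominating measure ν. Then the total variation distance of the n-fold product measures satisfies ‖P^⊗n − Q^⊗n‖_TV ≤ 1 − (1 − ‖P − Q‖_TV)^n. -/
open MeasureTheory

lemma min_eq_half_aux (a b : ℝ) : min a b = (a + b - |a - b|) / 2 := by
  rcases le_total a b with h | h
  · rw [min_eq_left h, abs_of_nonpos (by linarith)]; ring
  · rw [min_eq_right h, abs_of_nonneg (by linarith)]; ring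

lemma integrable_min_aux {α : Type*} [MeasurableSpace α] {ν : Measure α} {f g : α → ℝ}
    (hfi : Integrable f ν) (hgi : Integrable g ν) :
    Integrable (fun x => min (f x) (g x)) ν := by
  have : (fun x => min (f x) (g x)) = fun x => (f x + g x - |f x - g x|) / 2 := by
    funext x; exact min_eq_half_aux _ _
  rw [this]
  exact ((hfi.add hgi).sub (hfi.sub hgi).abs).div_const 2

lemma tv_min_aux {α : Type*} [MeasurableSpace α] (ν : Measure α) (f g : α → ℝ)
    (hfi : Integrable f ν) (hgi : Integrable g ν)
    (hf1 : ∫ x, f x ∂ν = 1) (hg1 : ∫ x, g x ∂ν = 1) :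
    (1/2) * ∫ x, |f x - g x| ∂ν = 1 - ∫ x, min (f x) (g x) ∂ν := by
  have h1 : ∫ x, min (f x) (g x) ∂ν = ∫ x, (f x + g x - |f x - g x|) / 2 ∂ν := by
    congr 1; funext x; exact min_eq_half_aux _ _
  have h2 : ∫ x, (f x + g x - |f x - g x|) / 2 ∂ν
      = (∫ x, (f x + g x - |f x - g x|) ∂ν) / 2 := integral_div 2 _
  have h3 : ∫ x, (f x + g x - |f x - g x|) ∂ν
      = (∫ x, f x ∂ν) + (∫ x, g x ∂ν) - ∫ x, |f x - g x| ∂ν := by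
    have ha := integral_sub (hfi.add hgi) (hfi.sub hgi).abs
    have hb := integral_add hfi hgi
    simp only [Pi.add_apply, Pi.sub_apply, Pi.abs_apply] at ha hb
    rw [ha, hb]
  rw [h1, h2, h3, hf1, hg1]; ring

/-- If `P, Q` are probability measures with densities `p, q` with respect to a common
σ-finite measure `ν`, then the total variation distance of the `n`-fold product
measures (expressed via the product densities) satisfies
`‖P^⊗n − Q^⊗n‖_TV ≤ 1 − (1 − ‖P − Q‖_TV)^n`, where `‖P − Q‖_TV = (1/2)∫|p−q| dν`. -/
theorem stmt1 {α : Type*} [MeasurableSpace α] (ν : Measure α) [SigmaFinite ν]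
    (n : ℕ) (p q : α → ℝ)
    (hpm : Measurable p) (hqm : Measurable q)
    (hp0 : ∀ x, 0 ≤ p x) (hq0 : ∀ x, 0 ≤ q x)
    (hpi : Integrable p ν) (hqi : Integrable q ν)
    (hp1 : ∫ x, p x ∂ν = 1) (hq1 : ∫ x, q x ∂ν = 1) :
    (1/2) * ∫ x : Fin n → α, |(∏ i, p (x i)) - ∏ i, q (x i)| ∂(Measure.pi fun _ => ν)
      ≤ 1 - (1 - (1/2) * ∫ x, |p x - q x| ∂ν) ^ n := by
  letI : MeasureSpace α := ⟨ν⟩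
  have hSF : SigmaFinite (volume : Measure α) := ‹_›
  set m : α → ℝ := fun x => min (p x) (q x) with hm
  have hmi : Integrable m ν := integrable_min_aux hpi hqi
  -- product densities
  set P : (Fin n → α) → ℝ := fun x => ∏ i, p (x i) with hP
  set Q : (Fin n → α) → ℝ := fun x => ∏ i, q (x i) with hQ
  have hvol : (volume : Measure (Fin n → α)) = Measure.pi fun _ => ν := rfl
  have hPi : Integrable P (Measure.pi fun _ => ν) := by
    rw [← hvol]; exact Integrable.fintype_prod (f := fun _ : Fin n => p) (fun _ => hpi)
  have hQi : Integrable Q (Measure.pi fun _ => ν) := by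
    rw [← hvol]; exact Integrable.fintype_prod (f := fun _ : Fin n => q) (fun _ => hqi)
  have hMi : Integrable (fun x : Fin n → α => ∏ i, m (x i)) (Measure.pi fun _ => ν) := by
    rw [← hvol]; exact Integrable.fintype_prod (f := fun _ : Fin n => m) (fun _ => hmi)
  have hP1 : ∫ x : Fin n → α, P x ∂(Measure.pi fun _ => ν) = 1 := by
    rw [← hvol]
    rw [show (∫ x : Fin n → α, P x) = (∫ x : Fin n → α, ∏ i, p (x i)) from rfl,
      integral_fintype_prod_volume_eq_pow (ι := Fin n) p,
      show (∫ x, p x) = ∫ x, p x ∂ν from rfl, hp1, one_pow]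
  have hQ1 : ∫ x : Fin n → α, Q x ∂(Measure.pi fun _ => ν) = 1 := by
    rw [← hvol]
    rw [show (∫ x : Fin n → α, Q x) = (∫ x : Fin n → α, ∏ i, q (x i)) from rfl,
      integral_fintype_prod_volume_eq_pow (ι := Fin n) q,
      show (∫ x, q x) = ∫ x, q x ∂ν from rfl, hq1, one_pow]
  have hM1 : ∫ x : Fin n → α, ∏ i, m (x i) ∂(Measure.pi fun _ => ν) = (∫ x, m x ∂ν) ^ n := by
    rw [← hvol, integral_fintype_prod_volume_eq_pow (ι := Fin n) m,
      show (∫ x, m x) = ∫ x, m x ∂ν from rfl]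
    simp
  -- TV identities
  have hTVbase : (1/2) * ∫ x, |p x - q x| ∂ν = 1 - ∫ x, m x ∂ν :=
    tv_min_aux ν p q hpi hqi hp1 hq1
  have hTVprod : (1/2) * ∫ x : Fin n → α, |P x - Q x| ∂(Measure.pi fun _ => ν)
      = 1 - ∫ x : Fin n → α, min (P x) (Q x) ∂(Measure.pi fun _ => ν) :=
    tv_min_aux _ P Q hPi hQi hP1 hQ1
  -- pointwise comparison
  have hpt : ∀ x : Fin n → α, ∏ i, m (x i) ≤ min (P x) (Q x) := by
    intro x
    refine le_min ?_ ?_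
    · exact Finset.prod_le_prod (fun i _ => le_min (hp0 _) (hq0 _)) (fun i _ => min_le_left _ _)
    · exact Finset.prod_le_prod (fun i _ => le_min (hp0 _) (hq0 _)) (fun i _ => min_le_right _ _)
  have hmono : ∫ x : Fin n → α, ∏ i, m (x i) ∂(Measure.pi fun _ => ν)
      ≤ ∫ x : Fin n → α, min (P x) (Q x) ∂(Measure.pi fun _ => ν) :=
    integral_mono hMi (integrable_min_aux hPi hQi) hpt
  rw [hTVprod, hTVbase]
  have : (∫ x, m x ∂ν) ^ n ≤ ∫ x : Fin n → α, min (P x) (Q x) ∂(Measure.pi fun _ => ν) := by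
    rw [← hM1]; exact hmono
  simp only [sub_sub_cancel]
  linarith
end

section
/- For a probability measure ν and nonnegative measurable functions p_i, q_i (i = 1,…,n), one has ∫ (∏_{i=1}^n p_i(x_i)) ∧ (∏_{i=1}^n q_i(x_i)) dν^⊗n ≥ ∏_{i=1}^n ∫ p_i ∧ q_i dν. -/
open MeasureTheory
open scoped ENNReal

lemma aux_lintegral_pi_prod {α : Type*} [MeasurableSpace α] (ν : Measure α)
    [IsProbabilityMeasure ν] :
    ∀ (n : ℕ) (f : Fin n → α → ℝ≥0∞), (∀ i, Measurable (f i)) →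
      ∫⁻ x : Fin n → α, ∏ i, f i (x i) ∂(Measure.pi fun _ => ν)
        = ∏ i, ∫⁻ x, f i x ∂ν := by
  intro n
  induction n with
  | zero => intro f hf; simp
  | succ n ih =>
    intro f hf
    have hmp := (MeasureTheory.measurePreserving_piFinSuccAbove (fun _ : Fin (n + 1) => ν) 0)
    have hg : Measurable fun z : α × (Fin n → α) => f 0 z.1 * ∏ j, f j.succ (z.2 j) :=
      ((hf 0).comp measurable_fst).mul
        (Finset.measurable_prod _ fun j _ =>
          (hf j.succ).comp ((measurable_pi_apply j).comp measurable_snd))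
    have key : ∫⁻ x : Fin (n + 1) → α, ∏ i, f i (x i) ∂(Measure.pi fun _ => ν)
        = ∫⁻ z : α × (Fin n → α), f 0 z.1 * ∏ j, f j.succ (z.2 j)
            ∂(ν.prod (Measure.pi fun _ : Fin n => ν)) := by
      rw [← hmp.lintegral_comp hg]
      refine lintegral_congr fun x => ?_
      simp [MeasurableEquiv.piFinSuccAbove, Fin.prod_univ_succ, Fin.succAbove,
        Fin.insertNthEquiv, Fin.tail]
    rw [key, lintegral_prod_mul (f := f 0) (g := fun y : Fin n → α => ∏ j, f j.succ (y j))
        (hf 0).aemeasurable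
        (Finset.measurable_prod _ fun j _ =>
          (hf j.succ).comp (measurable_pi_apply j)).aemeasurable,
      ih _ fun j => hf j.succ, Fin.prod_univ_succ]

/-- For a probability measure `ν` and nonnegative measurable functions `p_i, q_i`,
`∫ (∏ p_i(x_i)) ∧ (∏ q_i(x_i)) dν^⊗n ≥ ∏ ∫ p_i ∧ q_i dν`. -/
theorem stmt2 {α : Type*} [MeasurableSpace α] (ν : Measure α) [IsProbabilityMeasure ν]
    (n : ℕ) (p q : Fin n → α → ℝ≥0∞)
    (hp : ∀ i, Measurable (p i)) (hq : ∀ i, Measurable (q i)) :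
    ∏ i, ∫⁻ x, min (p i x) (q i x) ∂ν
      ≤ ∫⁻ x : Fin n → α, min (∏ i, p i (x i)) (∏ i, q i (x i))
          ∂(Measure.pi fun _ => ν) := by
  have := aux_lintegral_pi_prod ν n (fun i x => min (p i x) (q i x))
    (fun i => (hp i).min (hq i))
  rw [← this]
  refine lintegral_mono fun x => ?_
  exact le_min (Finset.prod_le_prod (fun i _ => zero_le) fun i _ => min_le_left _ _)
    (Finset.prod_le_prod (fun i _ => zero_le) fun i _ => min_le_right _ _)
end

section
/- Let g(x) = 960 x²(1/2 − x)² 1_{[0,1/2]}(x). For any θ ∈ (0,1/2), ∫₀¹ √(g(x−θ) g(x)) dx = 1 − 20θ²(1 − 2θ + 8θ³/5), and hence the squared Hellinger distance between the laws with densities g(·−θ) and g satisfies H² = 40θ²(1 − 2θ + 8θ³/5). -/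
open MeasureTheory Real

/-- The density `g(x) = 960 x²(1/2 − x)² 1_{[0,1/2]}(x)`. -/
noncomputable def gdens (x : ℝ) : ℝ :=
  Set.indicator (Set.Icc 0 (1/2)) (fun y => 960 * y^2 * (1/2 - y)^2) x

lemma gdens_nonneg (x : ℝ) : 0 ≤ gdens x := by
  apply Set.indicator_nonneg
  intro y _
  positivity

lemma gdens_of_mem {x : ℝ} (h : x ∈ Set.Icc (0:ℝ) (1/2)) :
    gdens x = 960 * x^2 * (1/2 - x)^2 := Set.indicator_of_mem h _

lemma gdens_of_nonpos {x : ℝ} (h : x ≤ 0) : gdens x = 0 := by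
  rcases h.lt_or_eq with h' | h'
  · exact Set.indicator_of_notMem (by simp [Set.mem_Icc]; intro hx; linarith) _
  · subst h'
    rw [gdens_of_mem (by norm_num)]; norm_num

lemma gdens_of_half_le {x : ℝ} (h : 1/2 ≤ x) : gdens x = 0 := by
  rcases h.lt_or_eq with h' | h'
  · exact Set.indicator_of_notMem (by simp [Set.mem_Icc]; intro hx; linarith) _
  · rw [← h', gdens_of_mem (by norm_num)]; norm_num

lemma II_congr {f g : ℝ → ℝ} {a b : ℝ} (hab : a ≤ b)
    (h : Set.EqOn f g (Set.Icc a b)) (hg : Continuous g) :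
    IntervalIntegrable f volume a b := by
  rw [intervalIntegrable_iff_integrableOn_Icc_of_le hab]
  exact (hg.integrableOn_Icc).congr_fun (fun x hx => (h hx).symm) measurableSet_Icc

lemma int_quartic (a b c0 c1 c2 c3 c4 : ℝ) :
    ∫ x in a..b, (c0 + c1*x + c2*x^2 + c3*x^3 + c4*x^4)
      = (c0*b + c1/2*b^2 + c2/3*b^3 + c3/4*b^4 + c4/5*b^5)
        - (c0*a + c1/2*a^2 + c2/3*a^3 + c3/4*a^4 + c4/5*a^5) := by
  have h : ∀ x : ℝ, HasDerivAt
      (fun x => c0*x + c1/2*x^2 + c2/3*x^3 + c3/4*x^4 + c4/5*x^5)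
      (c0 + c1*x + c2*x^2 + c3*x^3 + c4*x^4) x := by
    intro x
    have h1 : HasDerivAt (fun x : ℝ => c0*x) c0 x := by
      simpa using (hasDerivAt_id x).const_mul c0
    have h2 : HasDerivAt (fun x : ℝ => c1/2*x^2) (c1*x) x := by
      have := (hasDerivAt_pow 2 x).const_mul (c1/2)
      exact this.congr_deriv (by push_cast; ring)
    have h3 : HasDerivAt (fun x : ℝ => c2/3*x^3) (c2*x^2) x := by
      have := (hasDerivAt_pow 3 x).const_mul (c2/3)
      exact this.congr_deriv (by push_cast; ring)
    have h4 : HasDerivAt (fun x : ℝ => c3/4*x^4) (c3*x^3) x := by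
      have := (hasDerivAt_pow 4 x).const_mul (c3/4)
      exact this.congr_deriv (by push_cast; ring)
    have h5 : HasDerivAt (fun x : ℝ => c4/5*x^5) (c4*x^4) x := by
      have := (hasDerivAt_pow 5 x).const_mul (c4/5)
      exact this.congr_deriv (by push_cast; ring)
    exact (((h1.add h2).add h3).add h4).add h5
  exact intervalIntegral.integral_eq_sub_of_hasDerivAt (fun x _ => h x)
    ((by fun_prop : Continuous fun x : ℝ => c0 + c1*x + c2*x^2 + c3*x^3 + c4*x^4).intervalIntegrable a b)

lemma integral_poly_eq {a b : ℝ} (hab : a ≤ b) (f : ℝ → ℝ) (c0 c1 c2 c3 c4 : ℝ)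
    (h : Set.EqOn f (fun x => c0 + c1*x + c2*x^2 + c3*x^3 + c4*x^4) (Set.Icc a b)) :
    ∫ x in a..b, f x
      = (c0*b + c1/2*b^2 + c2/3*b^3 + c3/4*b^4 + c4/5*b^5)
        - (c0*a + c1/2*a^2 + c2/3*a^3 + c3/4*a^4 + c4/5*a^5) := by
  rw [intervalIntegral.integral_congr (g := fun x => c0 + c1*x + c2*x^2 + c3*x^3 + c4*x^4)
    (by rwa [Set.uIcc_of_le hab])]
  exact int_quartic a b c0 c1 c2 c3 c4

lemma split3 {F : ℝ → ℝ} {a b c d : ℝ}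
    (h1 : IntervalIntegrable F volume a b) (h2 : IntervalIntegrable F volume b c)
    (h3 : IntervalIntegrable F volume c d) :
    ∫ x in a..d, F x = (∫ x in a..b, F x) + (∫ x in b..c, F x) + (∫ x in c..d, F x) := by
  rw [← intervalIntegral.integral_add_adjacent_intervals h1 (h2.trans h3),
      ← intervalIntegral.integral_add_adjacent_intervals h2 h3]
  ring

lemma split4 {F : ℝ → ℝ} {a b c d e : ℝ}
    (h1 : IntervalIntegrable F volume a b) (h2 : IntervalIntegrable F volume b c)
    (h3 : IntervalIntegrable F volume c d) (h4 : IntervalIntegrable F volume d e) :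
    ∫ x in a..e, F x = (∫ x in a..b, F x) + (∫ x in b..c, F x)
      + (∫ x in c..d, F x) + (∫ x in d..e, F x) := by
  rw [← intervalIntegral.integral_add_adjacent_intervals h1 (h2.trans (h3.trans h4)),
      ← intervalIntegral.integral_add_adjacent_intervals h2 (h3.trans h4),
      ← intervalIntegral.integral_add_adjacent_intervals h3 h4]
  ring

/-- For any `θ ∈ (0,1/2)`, `∫₀¹ √(g(x−θ)g(x)) dx = 1 − 20θ²(1 − 2θ + 8θ³/5)`, hence
the squared Hellinger distance is `40θ²(1 − 2θ + 8θ³/5)`. -/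
theorem stmt13 (θ : ℝ) (hθ : θ ∈ Set.Ioo (0:ℝ) (1/2)) :
    (∫ x in (0:ℝ)..1, Real.sqrt (gdens (x - θ) * gdens x))
      = 1 - 20 * θ^2 * (1 - 2*θ + 8*θ^3/5) ∧
    (∫ x in (0:ℝ)..1, (Real.sqrt (gdens (x - θ)) - Real.sqrt (gdens x))^2)
      = 40 * θ^2 * (1 - 2*θ + 8*θ^3/5) := by
  obtain ⟨hθ0, hθh⟩ := hθ
  have hθ0' : (0:ℝ) ≤ θ := hθ0.le
  have hθh' : θ ≤ 1/2 := hθh.le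
  -- pointwise facts
  -- product sqrt on [θ, 1/2]
  have hmid : ∀ x ∈ Set.Icc θ (1/2:ℝ),
      Real.sqrt (gdens (x - θ) * gdens x)
        = 960*x*(x-θ)*(1/2-x)*(1/2+θ-x) := by
    intro x hx
    have hx1 : x - θ ∈ Set.Icc (0:ℝ) (1/2) := by
      constructor <;> [linarith [hx.1]; linarith [hx.2]]
    have hx2 : x ∈ Set.Icc (0:ℝ) (1/2) := ⟨by linarith [hx.1], hx.2⟩
    have hsq : gdens (x - θ) * gdens x = (960*x*(x-θ)*(1/2-x)*(1/2+θ-x))^2 := by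
      rw [gdens_of_mem hx1, gdens_of_mem hx2]; ring
    rw [hsq, Real.sqrt_sq]
    have h1 : 0 ≤ x := by linarith [hx.1]
    have h2 : 0 ≤ x - θ := by linarith [hx.1]
    have h3 : 0 ≤ 1/2 - x := by linarith [hx.2]
    have h4 : 0 ≤ 1/2 + θ - x := by linarith [hx.2]
    positivity
  -- Part 1
  have part1 : (∫ x in (0:ℝ)..1, Real.sqrt (gdens (x - θ) * gdens x))
      = 1 - 20 * θ^2 * (1 - 2*θ + 8*θ^3/5) := by
    set F : ℝ → ℝ := fun x => Real.sqrt (gdens (x - θ) * gdens x) with hF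
    have hA : Set.EqOn F (fun _ => (0:ℝ)) (Set.Icc 0 θ) := by
      intro x hx
      have : gdens (x - θ) = 0 := gdens_of_nonpos (by linarith [hx.2])
      simp [hF, this]
    have hB : Set.EqOn F (fun x => 0 + (-240*θ - 480*θ^2)*x
        + (240 + 1440*θ + 960*θ^2)*x^2 + (-960 - 1920*θ)*x^3 + 960*x^4)
        (Set.Icc θ (1/2)) := by
      intro x hx
      rw [hF]; simp only
      rw [hmid x hx]; ring
    have hC : Set.EqOn F (fun _ => (0:ℝ)) (Set.Icc (1/2) 1) := by
      intro x hx
      have : gdens x = 0 := gdens_of_half_le hx.1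
      simp [hF, this]
    have i1 : IntervalIntegrable F volume 0 θ := II_congr hθ0' hA continuous_const
    have i2 : IntervalIntegrable F volume θ (1/2) := II_congr hθh' hB (by fun_prop)
    have i3 : IntervalIntegrable F volume (1/2) 1 := II_congr (by norm_num) hC continuous_const
    have e1 : ∫ x in (0:ℝ)..θ, F x = 0 := by
      rw [intervalIntegral.integral_congr (g := fun _ => (0:ℝ)) (by rwa [Set.uIcc_of_le hθ0'])]
      simp
    have e3 : ∫ x in (1/2:ℝ)..1, F x = 0 := by
      rw [intervalIntegral.integral_congr (g := fun _ => (0:ℝ))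
        (by rw [Set.uIcc_of_le (by norm_num : (1/2:ℝ) ≤ 1)]; exact hC)]
      simp
    rw [split3 i1 i2 i3, e1, e3,
      integral_poly_eq hθh' F 0 (-240*θ - 480*θ^2) (240 + 1440*θ + 960*θ^2) (-960 - 1920*θ) 960 hB]
    ring
  refine ⟨part1, ?_⟩
  -- Part 2
  set F : ℝ → ℝ := fun x => (Real.sqrt (gdens (x - θ)) - Real.sqrt (gdens x))^2 with hF
  have hA : Set.EqOn F (fun x => 0 + 0*x + 240*x^2 + (-960)*x^3 + 960*x^4)
      (Set.Icc 0 θ) := by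
    intro x hx
    have h0 : gdens (x - θ) = 0 := gdens_of_nonpos (by linarith [hx.2])
    have hx2 : x ∈ Set.Icc (0:ℝ) (1/2) := ⟨hx.1, by linarith [hx.2]⟩
    rw [hF]; simp only
    rw [h0, Real.sqrt_zero, zero_sub, neg_sq, Real.sq_sqrt (gdens_nonneg x), gdens_of_mem hx2]
    ring
  have hB : Set.EqOn F (fun x => (240*θ^2 + 960*θ^3 + 960*θ^4)
      + (-1920*θ^2 - 3840*θ^3)*x + 3840*θ^2*x^2 + 0*x^3 + 0*x^4)
      (Set.Icc θ (1/2)) := by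
    intro x hx
    have hx1 : x - θ ∈ Set.Icc (0:ℝ) (1/2) := by
      constructor <;> [linarith [hx.1]; linarith [hx.2]]
    have hx2 : x ∈ Set.Icc (0:ℝ) (1/2) := ⟨by linarith [hx.1], hx.2⟩
    have hs : Real.sqrt (gdens (x - θ)) * Real.sqrt (gdens x)
        = 960*x*(x-θ)*(1/2-x)*(1/2+θ-x) := by
      rw [← Real.sqrt_mul (gdens_nonneg _)]; exact hmid x hx
    rw [hF]; simp only
    rw [sub_sq, Real.sq_sqrt (gdens_nonneg _), Real.sq_sqrt (gdens_nonneg _),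
        mul_assoc, hs, gdens_of_mem hx1, gdens_of_mem hx2]
    ring
  have hC : Set.EqOn F (fun x => (240*θ^2 + 960*θ^3 + 960*θ^4)
      + (-480*θ - 2880*θ^2 - 3840*θ^3)*x + (240 + 2880*θ + 5760*θ^2)*x^2
      + (-960 - 3840*θ)*x^3 + 960*x^4)
      (Set.Icc (1/2) (θ + 1/2)) := by
    intro x hx
    have h0 : gdens x = 0 := gdens_of_half_le hx.1
    have hx1 : x - θ ∈ Set.Icc (0:ℝ) (1/2) := by
      constructor <;> [linarith [hx.1]; linarith [hx.2]]
    rw [hF]; simp only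
    rw [h0, Real.sqrt_zero, sub_zero, Real.sq_sqrt (gdens_nonneg _), gdens_of_mem hx1]
    ring
  have hD : Set.EqOn F (fun _ => (0:ℝ)) (Set.Icc (θ + 1/2) 1) := by
    intro x hx
    have h0 : gdens x = 0 := gdens_of_half_le (by linarith [hx.1])
    have h1 : gdens (x - θ) = 0 := gdens_of_half_le (by linarith [hx.1])
    simp [hF, h0, h1]
  have hle1 : (1/2:ℝ) ≤ θ + 1/2 := by linarith
  have hle2 : θ + 1/2 ≤ 1 := by linarith
  have i1 : IntervalIntegrable F volume 0 θ := II_congr hθ0' hA (by fun_prop)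
  have i2 : IntervalIntegrable F volume θ (1/2) := II_congr hθh' hB (by fun_prop)
  have i3 : IntervalIntegrable F volume (1/2) (θ + 1/2) := II_congr hle1 hC (by fun_prop)
  have i4 : IntervalIntegrable F volume (θ + 1/2) 1 := II_congr hle2 hD continuous_const
  rw [split4 i1 i2 i3 i4]
  rw [integral_poly_eq hθ0' F 0 0 240 (-960) 960 hA,
      integral_poly_eq hθh' F (240*θ^2 + 960*θ^3 + 960*θ^4)
        (-1920*θ^2 - 3840*θ^3) (3840*θ^2) 0 0 hB,
      integral_poly_eq hle1 F (240*θ^2 + 960*θ^3 + 960*θ^4)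
        (-480*θ - 2880*θ^2 - 3840*θ^3) (240 + 2880*θ + 5760*θ^2) (-960 - 3840*θ) 960 hC,
      show (∫ x in (θ+1/2:ℝ)..1, F x) = 0 from by
        rw [intervalIntegral.integral_congr (g := fun _ => (0:ℝ)) (by rwa [Set.uIcc_of_le hle2])]
        simp]
  ring
end

section
/- Let g(x) = 960 x²(1/2 − x)² 1_{[0,1/2]}(x) and f_θ(x) = g(x−θ). There exists a constant c̃ > 1 such that for all θ, θ' ∈ (0,1/2), c̃^{−1}|θ − θ'|² ≤ H²(P_{f_θ}, P_{f_{θ'}}) ≤ c̃|θ − θ'|². -/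
open MeasureTheory Real

noncomputable def qf (y : ℝ) : ℝ := max (y * (1/2 - y)) 0

lemma qf_nonneg (y : ℝ) : 0 ≤ qf y := le_max_right _ _

lemma qf_cont : Continuous qf :=
  (continuous_id.mul (continuous_const.sub continuous_id)).max continuous_const

lemma qf_eq_of_mem {y : ℝ} (h0 : 0 ≤ y) (h1 : y ≤ 1/2) : qf y = y * (1/2 - y) :=
  max_eq_left (mul_nonneg h0 (by linarith))

lemma qf_eq_zero {y : ℝ} (h : y ≤ 0 ∨ 1/2 ≤ y) : qf y = 0 := by
  apply max_eq_right
  rcases h with h | h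
  · exact mul_nonpos_of_nonpos_of_nonneg h (by linarith)
  · exact mul_nonpos_of_nonneg_of_nonpos (by linarith) (by linarith)

lemma sqrt_gdens (y : ℝ) : Real.sqrt (gdens y) = Real.sqrt 960 * qf y := by
  by_cases hy : y ∈ Set.Icc (0:ℝ) (1/2)
  · rw [gdens, Set.indicator_of_mem hy]
    have h1 : 960 * y^2 * (1/2 - y)^2 = 960 * (y*(1/2 - y))^2 := by ring
    rw [h1, Real.sqrt_mul (by norm_num), Real.sqrt_sq (mul_nonneg hy.1 (by linarith [hy.2]))]
    rw [qf_eq_of_mem hy.1 hy.2]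
  · rw [gdens, Set.indicator_of_notMem hy, Real.sqrt_zero]
    have : y < 0 ∨ 1/2 < y := by
      by_contra hc
      push_neg at hc
      exact hy ⟨hc.1, hc.2⟩
    rw [qf_eq_zero (this.imp le_of_lt le_of_lt), mul_zero]

lemma F_eq (θ θ' x : ℝ) :
    (Real.sqrt (gdens (x - θ)) - Real.sqrt (gdens (x - θ')))^2
      = 960 * (qf (x - θ) - qf (x - θ'))^2 := by
  rw [sqrt_gdens, sqrt_gdens, ← mul_sub, mul_pow, Real.sq_sqrt (by norm_num : (0:ℝ) ≤ 960)]

lemma qf_sub_le (a b : ℝ) : qf a - qf b ≤ (1/2) * |a - b| := by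
  rcases le_or_gt (a*(1/2-a)) 0 with ha | ha
  · have hqa : qf a = 0 := max_eq_right ha
    have := qf_nonneg b
    have := abs_nonneg (a - b)
    linarith
  · have ha0 : 0 < a := by nlinarith [sq_nonneg a]
    have ha1 : a < 1/2 := by nlinarith [sq_nonneg (a - 1/2)]
    have hqa : qf a = a*(1/2-a) := max_eq_left ha.le
    rcases le_or_gt (b*(1/2-b)) 0 with hb | hb
    · have hqb : qf b = 0 := max_eq_right hb
      rw [hqa, hqb, sub_zero]
      rcases le_or_gt b 0 with hb0 | hb0
      · rw [abs_of_nonneg (by linarith : (0:ℝ) ≤ a - b)]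
        nlinarith [sq_nonneg a]
      · have hb1 : 1/2 ≤ b := by nlinarith [sq_nonneg (b - 1/2)]
        rw [abs_of_nonpos (by linarith : a - b ≤ 0)]
        nlinarith [sq_nonneg (2*a - 1)]
    · have hb0 : 0 < b := by nlinarith [sq_nonneg b]
      have hb1 : b < 1/2 := by nlinarith [sq_nonneg (b - 1/2)]
      rw [hqa, show qf b = b*(1/2-b) from max_eq_left hb.le]
      rcases abs_cases (a - b) with ⟨he, hs⟩ | ⟨he, hs⟩ <;> rw [he]
      · nlinarith [mul_nonneg (by linarith : (0:ℝ) ≤ a - b) (by linarith : (0:ℝ) ≤ a + b)]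
      · nlinarith [mul_nonneg (by linarith : (0:ℝ) ≤ b - a) (by linarith : (0:ℝ) ≤ 1 - a - b)]

lemma qf_lip (a b : ℝ) : |qf a - qf b| ≤ (1/2) * |a - b| := by
  rw [abs_sub_le_iff]
  exact ⟨qf_sub_le a b, by rw [abs_sub_comm]; exact qf_sub_le b a⟩

lemma key {θ θ' : ℝ} (hθ : θ ∈ Set.Ioo (0:ℝ) (1/2)) (hθ' : θ' ∈ Set.Ioo (0:ℝ) (1/2))
    (hle : θ ≤ θ') :
    (240:ℝ)⁻¹ * |θ - θ'|^2 ≤ (∫ x : ℝ, 960 * (qf (x - θ) - qf (x - θ'))^2) ∧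
    (∫ x : ℝ, 960 * (qf (x - θ) - qf (x - θ'))^2) ≤ 240 * |θ - θ'|^2 := by
  obtain ⟨hθ0, hθ1⟩ := hθ
  obtain ⟨hθ'0, hθ'1⟩ := hθ'
  set h : ℝ := θ' - θ with hh
  have hh0 : 0 ≤ h := by simp [hh]; linarith
  have hh2 : h < 1/2 := by simp [hh]; linarith
  have habs : |θ - θ'| = h := by rw [abs_sub_comm]; exact abs_of_nonneg hh0
  set F : ℝ → ℝ := fun x => 960 * (qf (x - θ) - qf (x - θ'))^2 with hFdef
  have hFnn : ∀ x, 0 ≤ F x := fun x => by positivity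
  have hFcont : Continuous F := by
    apply continuous_const.mul
    exact (((qf_cont.comp (continuous_id.sub continuous_const)).sub
      (qf_cont.comp (continuous_id.sub continuous_const))).pow 2)
  -- upper pointwise bound
  have hub : ∀ x, F x ≤ Set.indicator (Set.Icc θ (θ' + 1/2)) (fun _ => 240 * h^2) x := by
    intro x
    by_cases hx : x ∈ Set.Icc θ (θ' + 1/2)
    · rw [Set.indicator_of_mem hx]
      have hd : |qf (x - θ) - qf (x - θ')| ≤ h/2 := by
        have := qf_lip (x - θ) (x - θ')
        rwa [show (x - θ) - (x - θ') = h by ring, abs_of_nonneg hh0,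
          show (1/2) * h = h/2 by ring] at this
      have hsq : (qf (x - θ) - qf (x - θ'))^2 ≤ (h/2)^2 := by
        rw [← sq_abs]
        exact pow_le_pow_left₀ (abs_nonneg _) hd 2
      simp only [hFdef]
      nlinarith [hsq]
    · rw [Set.indicator_of_notMem hx]
      have hx' : x < θ ∨ θ' + 1/2 < x := by
        by_contra hc
        push_neg at hc
        exact hx ⟨hc.1, hc.2⟩
      have h1 : qf (x - θ) = 0 := by
        apply qf_eq_zero
        rcases hx' with h' | h'
        · left; linarith
        · right; linarith
      have h2 : qf (x - θ') = 0 := by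
        apply qf_eq_zero
        rcases hx' with h' | h'
        · left; linarith
        · right; linarith
      simp [hFdef, h1, h2]
  have hIub : Integrable (Set.indicator (Set.Icc θ (θ' + 1/2)) (fun _ => (240 * h^2 : ℝ))) := by
    rw [integrable_indicator_iff measurableSet_Icc]
    exact integrableOn_const measure_Icc_lt_top.ne
  have hFint : Integrable F := by
    refine hIub.mono' hFcont.aestronglyMeasurable ?_
    filter_upwards with x
    rw [Real.norm_eq_abs, abs_of_nonneg (hFnn x)]
    exact hub x
  constructor
  · -- lower bound
    rw [habs]
    rcases le_or_gt h (1/4) with hc | hc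
    · -- small h : use overlap region
      have hlb : ∀ x, Set.indicator (Set.Icc (θ + 7/16) (θ + 1/2)) (fun _ => 15 * h^2) x ≤ F x := by
        intro x
        by_cases hx : x ∈ Set.Icc (θ + 7/16) (θ + 1/2)
        · rw [Set.indicator_of_mem hx]
          obtain ⟨hx1, hx2⟩ := hx
          have e1 : qf (x - θ) = (x - θ) * (1/2 - (x - θ)) :=
            qf_eq_of_mem (by linarith) (by linarith)
          have e2 : qf (x - θ') = (x - θ') * (1/2 - (x - θ')) :=
            qf_eq_of_mem (by simp [hh] at hc ⊢; linarith) (by linarith)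
          simp only [hFdef]
          rw [e1, e2]
          have ht : 2*x - θ - θ' - 1/2 ≥ 1/8 := by simp only [hh] at hc; linarith
          have hkey : 0 ≤ (θ' - θ)^2 * ((2*x - θ - θ' - 1/2) - 1/8) * ((2*x - θ - θ' - 1/2) + 1/8) :=
            mul_nonneg (mul_nonneg (sq_nonneg _) (by linarith)) (by linarith)
          simp only [hh]
          nlinarith [hkey]
        · rw [Set.indicator_of_notMem hx]
          exact hFnn x
      have hIG : Integrable (Set.indicator (Set.Icc (θ + 7/16) (θ + 1/2)) (fun _ => (15 * h^2 : ℝ))) := by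
        rw [integrable_indicator_iff measurableSet_Icc]
        exact integrableOn_const measure_Icc_lt_top.ne
      have hmono := integral_mono hIG hFint hlb
      rw [MeasureTheory.integral_indicator_const _ measurableSet_Icc, Real.volume_real_Icc_of_le (by linarith),
        show θ + 1/2 - (θ + 7/16) = 1/16 by ring,
        smul_eq_mul] at hmono
      nlinarith [hmono, sq_nonneg h]
    · -- large h : disjoint-support region
      have hlb : ∀ x, Set.indicator (Set.Icc (θ + 1/8) (θ + 1/4)) (fun _ => (15/16 : ℝ)) x ≤ F x := by
        intro x
        by_cases hx : x ∈ Set.Icc (θ + 1/8) (θ + 1/4)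
        · rw [Set.indicator_of_mem hx]
          obtain ⟨hx1, hx2⟩ := hx
          have e1 : qf (x - θ) = (x - θ) * (1/2 - (x - θ)) :=
            qf_eq_of_mem (by linarith) (by linarith)
          have e2 : qf (x - θ') = 0 := by
            apply qf_eq_zero; left
            simp only [hh] at hc; linarith
          simp only [hFdef]
          rw [e1, e2, sub_zero]
          have hm : (x - θ) * (1/2 - (x - θ)) ≥ 1/32 := by
            nlinarith [mul_nonneg (by linarith : (0:ℝ) ≤ x - θ - 1/8) (by linarith : (0:ℝ) ≤ θ + 1/4 - x)]
          nlinarith [hm, sq_nonneg ((x - θ) * (1/2 - (x - θ)) - 1/32)]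
        · rw [Set.indicator_of_notMem hx]
          exact hFnn x
      have hIG : Integrable (Set.indicator (Set.Icc (θ + 1/8) (θ + 1/4)) (fun _ => (15/16 : ℝ))) := by
        rw [integrable_indicator_iff measurableSet_Icc]
        exact integrableOn_const measure_Icc_lt_top.ne
      have hmono := integral_mono hIG hFint hlb
      rw [MeasureTheory.integral_indicator_const _ measurableSet_Icc, Real.volume_real_Icc_of_le (by linarith),
        show θ + 1/4 - (θ + 1/8) = 1/8 by ring,
        smul_eq_mul] at hmono
      nlinarith [hmono, hh0, hh2]
  · -- upper bound
    rw [habs]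
    have hmono := integral_mono hFint hIub hub
    rw [MeasureTheory.integral_indicator_const _ measurableSet_Icc, Real.volume_real_Icc_of_le (by linarith),
      show θ' + 1/2 - θ = h + 1/2 by simp [hh]; ring,
      smul_eq_mul] at hmono
    nlinarith [hmono, sq_nonneg h]

/-- There exists `c̃ > 1` with
`c̃⁻¹|θ−θ'|² ≤ H²(P_{f_θ}, P_{f_{θ'}}) ≤ c̃|θ−θ'|²` for all `θ, θ' ∈ (0,1/2)`,
where `f_θ = g(·−θ)`. -/

theorem stmt14 :
    ∃ c : ℝ, 1 < c ∧
      ∀ θ ∈ Set.Ioo (0:ℝ) (1/2), ∀ θ' ∈ Set.Ioo (0:ℝ) (1/2),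
        c⁻¹ * |θ - θ'|^2
            ≤ (∫ x : ℝ, (Real.sqrt (gdens (x - θ)) - Real.sqrt (gdens (x - θ')))^2) ∧
        (∫ x : ℝ, (Real.sqrt (gdens (x - θ)) - Real.sqrt (gdens (x - θ')))^2)
            ≤ c * |θ - θ'|^2 := by
  refine ⟨240, by norm_num, ?_⟩
  intro θ hθ θ' hθ'
  simp only [F_eq]
  rcases le_total θ θ' with hle | hle
  · exact key hθ hθ' hle
  · have hk := key hθ' hθ hle
    have hswap : (∫ x : ℝ, 960 * (qf (x - θ') - qf (x - θ))^2)
        = ∫ x : ℝ, 960 * (qf (x - θ) - qf (x - θ'))^2 := by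
      congr 1
      funext x
      ring
    rw [abs_sub_comm, ← hswap]
    exact hk
end

section
/- Let β > 0 and let f : [0,1] → ℝ satisfy ‖f‖_{H^β} < ∞, where ‖f‖_{H^β} = ‖f‖_{C^β} + |f|_{H^β}. Let a > 0 satisfy (e^a − 1) + a^β/⌊β⌋! ≤ 1/2. Then for every x ∈ [0,1] and every h with x + h ∈ [0,1] and |h| ≤ a (|f(x)|/‖f‖_{H^β})^{1/β}, one has |f(x+h) − f(x)| ≤ (1/2)|f(x)|, and in particular |f(x)|/2 ≤ |f(x+h)| ≤ 3|f(x)|/2. -/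
open MeasureTheory Real Set

lemma transfer_iter {f : ℝ → ℝ} {k : ℕ} (hf : ContDiffOn ℝ k f (Set.Icc 0 1))
    {c d : ℝ} (hcd : c < d) (hsub : Set.Icc c d ⊆ Set.Icc (0:ℝ) 1)
    {m : ℕ} (hm : m ≤ k) {y : ℝ} (hy : y ∈ Set.Icc c d) :
    iteratedDerivWithin m f (Set.Icc c d) y = iteratedDerivWithin m f (Set.Icc 0 1) y := by
  have H := hf.ftaylorSeriesWithin (uniqueDiffOn_Icc (zero_lt_one))
  have H2 := H.mono hsub
  rw [iteratedDerivWithin_eq_iteratedFDerivWithin, iteratedDerivWithin_eq_iteratedFDerivWithin,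
    ← H2.eq_iteratedFDerivWithin_of_uniqueDiffOn (mod_cast hm) (uniqueDiffOn_Icc hcd) hy,
    ← H.eq_iteratedFDerivWithin_of_uniqueDiffOn (mod_cast hm) (uniqueDiffOn_Icc zero_lt_one) (hsub hy)]


lemma reflect_iter {f : ℝ → ℝ} {k : ℕ} (hf : ContDiffOn ℝ k f (Set.Icc 0 1)) :
    ∀ m : ℕ, m ≤ k → ∀ y ∈ Set.Icc (0:ℝ) 1,
      iteratedDerivWithin m (fun t => f (1 - t)) (Set.Icc 0 1) y
        = (-1)^m * iteratedDerivWithin m f (Set.Icc 0 1) (1 - y) := by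
  have hmaps : ∀ t ∈ Set.Icc (0:ℝ) 1, 1 - t ∈ Set.Icc (0:ℝ) 1 := by
    intro t ht; constructor <;> [linarith [ht.2]; linarith [ht.1]]
  intro m
  induction m with
  | zero => intro _ y hy; simp [iteratedDerivWithin_zero]
  | succ m IH =>
    intro hmk y hy
    have hmk' : m ≤ k := Nat.le_of_succ_le hmk
    have h1y : (1 - y) ∈ Set.Icc (0:ℝ) 1 := hmaps y hy
    set F := iteratedDerivWithin m f (Set.Icc 0 1) with hF
    have hFdiff : DifferentiableWithinAt ℝ F (Set.Icc 0 1) (1 - y) := by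
      have : (m : WithTop ℕ∞) < k := by exact_mod_cast Nat.lt_of_succ_le hmk
      exact hf.differentiableOn_iteratedDerivWithin this (uniqueDiffOn_Icc zero_lt_one) _ h1y
    have hinner : HasDerivWithinAt (fun t : ℝ => 1 - t) (-1) (Set.Icc 0 1) y :=
      (hasDerivWithinAt_id y _).const_sub 1
    have hcomp : HasDerivWithinAt (fun t => F (1 - t))
        (derivWithin F (Set.Icc 0 1) (1 - y) * (-1)) (Set.Icc 0 1) y :=
      HasDerivWithinAt.comp y (hFdiff.hasDerivWithinAt) hinner
        (fun t ht => hmaps t ht)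
    have hmul : HasDerivWithinAt (fun t => (-1:ℝ)^m * F (1 - t))
        ((-1:ℝ)^m * (derivWithin F (Set.Icc 0 1) (1 - y) * (-1))) (Set.Icc 0 1) y :=
      hcomp.const_mul _
    have hcongr : HasDerivWithinAt (iteratedDerivWithin m (fun t => f (1 - t)) (Set.Icc 0 1))
        ((-1:ℝ)^m * (derivWithin F (Set.Icc 0 1) (1 - y) * (-1))) (Set.Icc 0 1) y :=
      hmul.congr (fun z hz => IH hmk' z hz) (IH hmk' y hy)
    rw [iteratedDerivWithin_succ,
      hcongr.derivWithin (uniqueDiffOn_Icc zero_lt_one y hy),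
      iteratedDerivWithin_succ]
    ring

lemma key_lemma (β : ℝ) (hβ : 0 < β) (k : ℕ) (hk : k = ⌈β⌉₊ - 1)
    (f : ℝ → ℝ) (R : ℝ) (hR : 0 < R)
    (hf : ContDiffOn ℝ k f (Set.Icc 0 1))
    (hflat : ∀ j : ℕ, 1 ≤ j → (j:ℝ) < β → ∀ x ∈ Set.Icc (0:ℝ) 1,
      |iteratedDerivWithin j f (Set.Icc 0 1) x| ^ β ≤ R ^ (j:ℝ) * |f x| ^ (β - j))
    (hhold : ∀ x ∈ Set.Icc (0:ℝ) 1, ∀ y ∈ Set.Icc (0:ℝ) 1,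
      |iteratedDerivWithin k f (Set.Icc 0 1) x - iteratedDerivWithin k f (Set.Icc 0 1) y|
        ≤ R * |x - y| ^ (β - k))
    (a : ℝ) (ha : 0 < a)
    (haβ : (Real.exp a - 1) + a ^ β / (Nat.factorial k) ≤ 1/2) :
    ∀ x ∈ Set.Icc (0:ℝ) 1, ∀ h : ℝ, x + h ∈ Set.Icc (0:ℝ) 1 → 0 ≤ h →
      |h| ≤ a * (|f x| / R) ^ (1/β) →
      |f (x + h) - f x| ≤ (1/2) * |f x| := by
  intro x hx h hxh hh0 hha
  -- basic facts about k and β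
  have hceil : 1 ≤ ⌈β⌉₊ := Nat.one_le_ceil_iff.mpr hβ
  have hkβ : (k:ℝ) < β := by
    have h1 : (⌈β⌉₊ : ℝ) < β + 1 := Nat.ceil_lt_add_one hβ.le
    have h2 : (k:ℝ) = (⌈β⌉₊ : ℝ) - 1 := by
      rw [hk, Nat.cast_sub hceil]; norm_num
    linarith
  have hexp1 : 0 ≤ Real.exp a - 1 := by
    have := Real.one_le_exp ha.le; linarith
  -- trivial case f x = 0
  by_cases hfx0 : f x = 0
  · have : |h| ≤ 0 := by
      rw [hfx0] at hha
      simpa [abs_zero, zero_div, Real.zero_rpow (show β⁻¹ ≠ 0 by positivity)] using hha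
    have : h = 0 := abs_nonpos_iff.mp this
    simp [this, hfx0]
  have hfx : 0 < |f x| := abs_pos.mpr hfx0
  -- set u
  set u : ℝ := (|f x| / R) ^ (1/β) with hu_def
  have hu : 0 < u := Real.rpow_pos_of_pos (by positivity) _
  have huβ : u ^ β = |f x| / R := by
    rw [hu_def, ← Real.rpow_mul (by positivity), one_div, inv_mul_cancel₀ hβ.ne', Real.rpow_one]
  have hfxRu : |f x| = R * u ^ β := by rw [huβ]; field_simp
  by_cases hh : h = 0
  · simp only [hh, add_zero, sub_self, abs_zero]
    positivity
  have hhpos : 0 < h := lt_of_le_of_ne hh0 (Ne.symm hh)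
  have habs : h ≤ a * u := by rwa [abs_of_nonneg hh0] at hha
  have hhβ : h ^ β ≤ a ^ β * u ^ β := by
    calc h ^ β ≤ (a * u) ^ β := Real.rpow_le_rpow hh0 habs hβ.le
    _ = a ^ β * u ^ β := Real.mul_rpow ha.le hu.le
  rcases k with _ | m
  · -- k = 0 : direct Hölder bound
    have h0 := hhold (x + h) hxh x hx
    simp only [iteratedDerivWithin_zero, Nat.cast_zero, sub_zero, add_sub_cancel_left] at h0
    have h1 : |f (x + h) - f x| ≤ R * h ^ β := by
      rwa [abs_of_nonneg hh0] at h0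
    have h2 : R * h ^ β ≤ a ^ β * |f x| := by
      calc R * h ^ β ≤ R * (a ^ β * u ^ β) := by
            exact mul_le_mul_of_nonneg_left hhβ hR.le
        _ = a ^ β * (R * u ^ β) := by ring
        _ = a ^ β * |f x| := by rw [← hfxRu]
    have h3 : a ^ β ≤ 1/2 := by
      simp only [Nat.factorial_zero, Nat.cast_one, div_one] at haβ
      linarith
    calc |f (x + h) - f x| ≤ a ^ β * |f x| := h1.trans h2
      _ ≤ 1/2 * |f x| := mul_le_mul_of_nonneg_right h3 hfx.le
  · -- k = m + 1 : Taylor expansion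
    have hxx1 : x < x + h := by linarith
    have hsub : Set.Icc x (x + h) ⊆ Set.Icc (0:ℝ) 1 := Set.Icc_subset_Icc hx.1 hxh.2
    have hft : ContDiffOn ℝ (m + 1 : ℕ) f (Set.Icc x (x + h)) := hf.mono hsub
    have hf' : DifferentiableOn ℝ (iteratedDerivWithin m f (Set.Icc x (x + h)))
        (Set.Ioo x (x + h)) := by
      refine (hft.differentiableOn_iteratedDerivWithin ?_
        (uniqueDiffOn_Icc hxx1)).mono Set.Ioo_subset_Icc_self
      exact_mod_cast Nat.lt_succ_self m
    obtain ⟨ξ, hξ, hT⟩ := taylor_mean_remainder_lagrange hxx1.ne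
      (by rw [Set.uIcc_of_le hxx1.le]; exact hft.of_le (by exact_mod_cast Nat.le_succ m))
      (by rw [Set.uIcc_of_le hxx1.le, Set.uIoo_of_lt hxx1]; exact hf')
    rw [Set.uIoo_of_lt hxx1] at hξ
    rw [Set.uIcc_of_le hxx1.le] at hT
    have hξI : ξ ∈ Set.Icc x (x + h) := Set.Ioo_subset_Icc_self hξ
    set c : ℕ → ℝ := fun j => ((j.factorial : ℝ)⁻¹ * h ^ j) *
      iteratedDerivWithin j f (Set.Icc 0 1) x with hc_def
    set Dk : ℝ → ℝ := fun y => iteratedDerivWithin (m + 1) f (Set.Icc 0 1) y with hDk_def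
    rw [taylor_within_apply] at hT
    have hT' : f (x + h) = (∑ j ∈ Finset.range (m + 1), c j)
        + Dk ξ * h ^ (m + 1) / (m + 1).factorial := by
      have e : ∀ j ∈ Finset.range (m + 1),
          ((j.factorial : ℝ)⁻¹ * (x + h - x) ^ j) •
            iteratedDerivWithin j f (Set.Icc x (x + h)) x = c j := by
        intro j hj
        rw [transfer_iter hf hxx1 hsub ((Nat.le_of_lt_succ (Finset.mem_range.mp hj)).trans
          (Nat.le_succ m)) (Set.left_mem_Icc.mpr hxx1.le)]
        simp [c, smul_eq_mul]
      rw [Finset.sum_congr rfl e] at hT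
      rw [transfer_iter hf hxx1 hsub le_rfl hξI] at hT
      have : x + h - x = h := by ring
      rw [this] at hT
      linarith [hT]
    have hid : f (x + h) - f x = (∑ i ∈ Finset.range (m + 1), c (i + 1))
        + (Dk ξ - Dk x) * h ^ (m + 1) / (m + 1).factorial := by
      have e1 : ∑ j ∈ Finset.range (m + 2), c j
          = (∑ i ∈ Finset.range (m + 1), c (i + 1)) + c 0 := Finset.sum_range_succ' c (m + 1)
      have e2 : ∑ j ∈ Finset.range (m + 2), c j
          = (∑ j ∈ Finset.range (m + 1), c j) + c (m + 1) := Finset.sum_range_succ c (m + 1)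
      have hc0 : c 0 = f x := by simp [hc_def, iteratedDerivWithin_zero]
      have hck : c (m + 1) = ((m + 1).factorial : ℝ)⁻¹ * h ^ (m + 1) * Dk x := rfl
      rw [hT']
      linear_combination e1 - e2 + hc0 - hck
    -- bound on each Taylor term
    have hterm : ∀ i ∈ Finset.range (m + 1),
        |c (i + 1)| ≤ a ^ (i + 1) / (i + 1).factorial * |f x| := by
      intro i hi
      have hj1 : 1 ≤ i + 1 := Nat.le_add_left 1 i
      have hjβ : ((i + 1 : ℕ) : ℝ) < β := by
        have h1 : ((i + 1 : ℕ) : ℝ) ≤ ((m + 1 : ℕ) : ℝ) := by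
          exact_mod_cast Nat.succ_le_succ (Nat.lt_succ_iff.mp (Finset.mem_range.mp hi))
        linarith
      have hD := hflat (i + 1) hj1 hjβ x hx
      have hDj : |iteratedDerivWithin (i + 1) f (Set.Icc 0 1) x| ≤ R * u ^ (β - (i + 1 : ℕ)) := by
        by_contra hlt
        push_neg at hlt
        have h2 : (R * u ^ (β - (i + 1 : ℕ))) ^ β
            < |iteratedDerivWithin (i + 1) f (Set.Icc 0 1) x| ^ β :=
          Real.rpow_lt_rpow (by positivity) hlt hβ
        have h3 : (R * u ^ (β - ((i + 1 : ℕ) : ℝ))) ^ β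
            = R ^ ((i + 1 : ℕ) : ℝ) * |f x| ^ (β - ((i + 1 : ℕ) : ℝ)) := by
          rw [hfxRu, Real.mul_rpow hR.le (Real.rpow_nonneg hu.le _),
            Real.mul_rpow hR.le (Real.rpow_nonneg hu.le _),
            ← Real.rpow_mul hu.le, ← Real.rpow_mul hu.le, ← mul_assoc, ← Real.rpow_add hR,
            show ((i + 1 : ℕ) : ℝ) + (β - ((i + 1 : ℕ) : ℝ)) = β by ring,
            show (β - ((i + 1 : ℕ) : ℝ)) * β = β * (β - ((i + 1 : ℕ) : ℝ)) by ring]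
        rw [h3] at h2
        linarith
      -- now combine
      have humul : (u : ℝ) ^ (i + 1) * u ^ (β - ((i + 1 : ℕ) : ℝ)) = u ^ β := by
        rw [← Real.rpow_natCast u (i + 1), ← Real.rpow_add hu,
          show ((i + 1 : ℕ) : ℝ) + (β - ((i + 1 : ℕ) : ℝ)) = β by ring]
      have hhj : h ^ (i + 1) ≤ (a * u) ^ (i + 1) := pow_le_pow_left₀ hh0 habs (i + 1)
      have hcabs : |c (i + 1)| = (((i + 1).factorial : ℝ))⁻¹ * h ^ (i + 1) *
          |iteratedDerivWithin (i + 1) f (Set.Icc 0 1) x| := by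
        rw [hc_def]
        simp only [abs_mul]
        rw [abs_of_nonneg (by positivity : (0:ℝ) ≤ (((i + 1).factorial : ℝ))⁻¹),
          abs_of_nonneg (pow_nonneg hh0 _)]
      rw [hcabs]
      calc (((i + 1).factorial : ℝ))⁻¹ * h ^ (i + 1) *
            |iteratedDerivWithin (i + 1) f (Set.Icc 0 1) x|
          ≤ (((i + 1).factorial : ℝ))⁻¹ * ((a * u) ^ (i + 1)) * (R * u ^ (β - ((i + 1 : ℕ) : ℝ))) := by
            apply mul_le_mul ?_ hDj (abs_nonneg _) (by positivity)
            exact mul_le_mul_of_nonneg_left hhj (by positivity)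
        _ = a ^ (i + 1) / (i + 1).factorial * |f x| := by
            rw [hfxRu, mul_pow]
            linear_combination ((((i + 1).factorial : ℝ))⁻¹ * a ^ (i + 1) * R) * humul
    -- remainder bound
    have hrem : |Dk ξ - Dk x| * h ^ (m + 1) / (m + 1).factorial
        ≤ a ^ β / (m + 1).factorial * |f x| := by
      have hξx : |ξ - x| ≤ h := by
        rw [abs_of_pos (by linarith [hξ.1] : 0 < ξ - x)]
        linarith [hξ.2]
      have h1 : |Dk ξ - Dk x| ≤ R * h ^ (β - ((m + 1 : ℕ) : ℝ)) := by
        have hβk' : (0:ℝ) ≤ β - ((m + 1 : ℕ) : ℝ) := by linarith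
        exact (hhold ξ (hsub hξI) x hx).trans
          (mul_le_mul_of_nonneg_left (Real.rpow_le_rpow (abs_nonneg _) hξx hβk') hR.le)
      have hmul : h ^ (β - ((m + 1 : ℕ) : ℝ)) * h ^ (m + 1) = h ^ β := by
        rw [← Real.rpow_natCast h (m + 1), ← Real.rpow_add hhpos,
          show β - ((m + 1 : ℕ) : ℝ) + ((m + 1 : ℕ) : ℝ) = β by ring]
      have h2 : |Dk ξ - Dk x| * h ^ (m + 1) ≤ R * h ^ β := by
        calc |Dk ξ - Dk x| * h ^ (m + 1)
            ≤ (R * h ^ (β - ((m + 1 : ℕ) : ℝ))) * h ^ (m + 1) :=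
              mul_le_mul_of_nonneg_right h1 (pow_nonneg hh0 _)
          _ = R * h ^ β := by rw [mul_assoc, hmul]
      have h3 : R * h ^ β ≤ a ^ β * |f x| := by
        calc R * h ^ β ≤ R * (a ^ β * u ^ β) := mul_le_mul_of_nonneg_left hhβ hR.le
          _ = a ^ β * (R * u ^ β) := by ring
          _ = a ^ β * |f x| := by rw [← hfxRu]
      rw [div_le_iff₀ (by positivity : (0:ℝ) < ((m + 1).factorial : ℝ))]
      calc |Dk ξ - Dk x| * h ^ (m + 1) ≤ a ^ β * |f x| := h2.trans h3
        _ = a ^ β / (m + 1).factorial * |f x| * (m + 1).factorial := by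
            field_simp
    -- sum bound
    have hsum_le : ∑ i ∈ Finset.range (m + 1), |c (i + 1)|
        ≤ (Real.exp a - 1) * |f x| := by
      calc ∑ i ∈ Finset.range (m + 1), |c (i + 1)|
          ≤ ∑ i ∈ Finset.range (m + 1), a ^ (i + 1) / (i + 1).factorial * |f x| :=
            Finset.sum_le_sum hterm
        _ = (∑ i ∈ Finset.range (m + 1), a ^ (i + 1) / (i + 1).factorial) * |f x| := by
            rw [Finset.sum_mul]
        _ ≤ (Real.exp a - 1) * |f x| := by
            apply mul_le_mul_of_nonneg_right ?_ hfx.le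
            have hexp := Real.sum_le_exp_of_nonneg ha.le (m + 2)
            rw [Finset.sum_range_succ'] at hexp
            simp only [pow_zero, Nat.factorial_zero, Nat.cast_one, div_one] at hexp
            linarith
    -- conclude
    calc |f (x + h) - f x|
        ≤ (∑ i ∈ Finset.range (m + 1), |c (i + 1)|)
          + |Dk ξ - Dk x| * h ^ (m + 1) / (m + 1).factorial := by
          rw [hid]
          refine (abs_add_le _ _).trans ?_
          gcongr
          · exact Finset.abs_sum_le_sum_abs _ _
          · rw [abs_div, abs_mul, abs_of_nonneg (pow_nonneg hh0 _), Nat.abs_cast]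
      _ ≤ (Real.exp a - 1) * |f x| + a ^ β / (m + 1).factorial * |f x| := add_le_add hsum_le hrem
      _ ≤ 1/2 * |f x| := by nlinarith [hfx]

/-- Flat Hölder lemma (Lemma 1 of the companion paper): let `β > 0`, let
`k = ⌈β⌉₊ − 1` be the largest integer strictly smaller than `β`, and suppose
`f` is `k`-times differentiable on `[0,1]` with `‖f‖_{H^β} ≤ R`, encoded by the
sup-norm bound, the flatness bounds `|f^{(j)}(x)|^β ≤ R^j |f(x)|^{β−j}` for
`1 ≤ j < β`, and the Hölder bound on `f^{(k)}` with constant `R`. If `a > 0`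
satisfies `(e^a − 1) + a^β/k! ≤ 1/2`, then for `|h| ≤ a(|f(x)|/R)^{1/β}` we have
`|f(x+h) − f(x)| ≤ (1/2)|f(x)|`, hence `|f(x)|/2 ≤ |f(x+h)| ≤ 3|f(x)|/2`. -/
theorem stmt16 (β : ℝ) (hβ : 0 < β) (k : ℕ) (hk : k = ⌈β⌉₊ - 1)
    (f : ℝ → ℝ) (R : ℝ) (hR : 0 < R)
    (hf : ContDiffOn ℝ k f (Set.Icc 0 1))
    (hsup : ∀ x ∈ Set.Icc (0:ℝ) 1, |f x| ≤ R)
    (hflat : ∀ j : ℕ, 1 ≤ j → (j:ℝ) < β → ∀ x ∈ Set.Icc (0:ℝ) 1,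
      |iteratedDerivWithin j f (Set.Icc 0 1) x| ^ β ≤ R ^ (j:ℝ) * |f x| ^ (β - j))
    (hhold : ∀ x ∈ Set.Icc (0:ℝ) 1, ∀ y ∈ Set.Icc (0:ℝ) 1,
      |iteratedDerivWithin k f (Set.Icc 0 1) x - iteratedDerivWithin k f (Set.Icc 0 1) y|
        ≤ R * |x - y| ^ (β - k))
    (a : ℝ) (ha : 0 < a)
    (haβ : (Real.exp a - 1) + a ^ β / (Nat.factorial k) ≤ 1/2) :
    ∀ x ∈ Set.Icc (0:ℝ) 1, ∀ h : ℝ, x + h ∈ Set.Icc (0:ℝ) 1 →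
      |h| ≤ a * (|f x| / R) ^ (1/β) →
      |f (x + h) - f x| ≤ (1/2) * |f x| ∧
      |f x| / 2 ≤ |f (x + h)| ∧ |f (x + h)| ≤ 3 * |f x| / 2 := by
  intro x hx h hxh hha
  have hmaps : ∀ t ∈ Set.Icc (0:ℝ) 1, 1 - t ∈ Set.Icc (0:ℝ) 1 := by
    intro t ht; constructor <;> [linarith [ht.2]; linarith [ht.1]]
  have key1 : |f (x + h) - f x| ≤ (1/2) * |f x| := by
    rcases le_or_gt 0 h with hh0 | hh0
    · exact key_lemma β hβ k hk f R hR hf hflat hhold a ha haβ x hx h hxh hh0 hha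
    · -- reflect
      set g : ℝ → ℝ := fun t => f (1 - t) with hg_def
      have hjk : ∀ j : ℕ, (j:ℝ) < β → j ≤ k := by
        intro j hj
        have : j < ⌈β⌉₊ := Nat.lt_ceil.mpr hj
        omega
      have hrefl := reflect_iter hf
      have hg : ContDiffOn ℝ k g (Set.Icc 0 1) := by
        apply hf.comp ((contDiff_const.sub contDiff_id).contDiffOn) hmaps
      have hflat_g : ∀ j : ℕ, 1 ≤ j → (j:ℝ) < β → ∀ y ∈ Set.Icc (0:ℝ) 1,
          |iteratedDerivWithin j g (Set.Icc 0 1) y| ^ β ≤ R ^ (j:ℝ) * |g y| ^ (β - j) := by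
        intro j hj1 hjβ y hy
        rw [hrefl j (hjk j hjβ) y hy, abs_mul, abs_pow, abs_neg, abs_one, one_pow, one_mul]
        exact hflat j hj1 hjβ (1 - y) (hmaps y hy)
      have hhold_g : ∀ y ∈ Set.Icc (0:ℝ) 1, ∀ z ∈ Set.Icc (0:ℝ) 1,
          |iteratedDerivWithin k g (Set.Icc 0 1) y - iteratedDerivWithin k g (Set.Icc 0 1) z|
            ≤ R * |y - z| ^ (β - k) := by
        intro y hy z hz
        rw [hrefl k le_rfl y hy, hrefl k le_rfl z hz, ← mul_sub, abs_mul, abs_pow, abs_neg,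
          abs_one, one_pow, one_mul]
        have := hhold (1 - y) (hmaps y hy) (1 - z) (hmaps z hz)
        rwa [show (1 - y) - (1 - z) = -(y - z) by ring, abs_neg] at this
      have hx' : 1 - x ∈ Set.Icc (0:ℝ) 1 := hmaps x hx
      have hxh' : 1 - x + -h ∈ Set.Icc (0:ℝ) 1 := by
        have := hmaps (x + h) hxh
        have e : 1 - (x + h) = 1 - x + -h := by ring
        rwa [e] at this
      have hgx : g (1 - x) = f x := by simp [hg_def]
      have hgxh : g (1 - x + -h) = f (x + h) := by
        rw [hg_def]
        norm_num
        ring_nf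
      have hha' : |(-h)| ≤ a * (|g (1 - x)| / R) ^ (1/β) := by
        rw [abs_neg, hgx]; exact hha
      have := key_lemma β hβ k hk g R hR hg hflat_g hhold_g a ha haβ (1 - x) hx' (-h) hxh'
        (by linarith) hha'
      rwa [hgxh, hgx] at this
  refine ⟨key1, ?_, ?_⟩
  · have h1 : |f x| - |f (x + h)| ≤ |f (x + h) - f x| := by
      have := abs_sub_abs_le_abs_sub (f x) (f (x + h))
      rwa [abs_sub_comm] at this
    linarith
  · have h2 : |f (x + h)| - |f x| ≤ |f (x + h) - f x| := abs_sub_abs_le_abs_sub _ _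
    linarith
end

section
/- In the setting of the two perturbed densities f₁, f₂ (defined via f_j = f₀(1 − γF + γ K∘v_j), with v_j(x) = (F₀(x) − F₀(x_{j−1}))/F, K ≥ 0 supported on [0,1] with ∫K = 1, γF < 1), the squared Hellinger distance satisfies ‖√f₁ − √f₂‖₂² = 2F ∫₀¹ (√(1 − γF + γK(u)) − √(1 − γF))² du ≥ 2F(1 − γF)(√(1+γ) − 1)². -/
open MeasureTheory Real Set intervalIntegral
open scoped NNReal ENNReal

/-- On a level set of the primitive, the density vanishes a.e. -/
lemma levelset_ae {f : ℝ → ℝ} (hm : Measurable f) (h0 : ∀ x, 0 ≤ f x)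
    (hint : IntervalIntegrable f volume 0 1)
    {G : ℝ → ℝ} (hG : ∀ x, G x = ∫ t in (0:ℝ)..x, f t) (c₀ : ℝ) :
    ∀ᵐ x ∂(volume.restrict (Set.Icc (0:ℝ) 1)), G x = c₀ → f x = 0 := by
  have hsub : ∀ {x y : ℝ}, 0 ≤ x → x ≤ y → y ≤ 1 → IntervalIntegrable f volume x y := by
    intro x y hx hxy hy
    exact hint.mono_set (Set.uIcc_subset_uIcc
      (by rw [Set.uIcc_of_le (by norm_num)]; exact ⟨hx, le_trans hxy hy⟩)
      (by rw [Set.uIcc_of_le (by norm_num)]; exact ⟨le_trans hx hxy, hy⟩))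
  have hGsub : ∀ {x y : ℝ}, 0 ≤ x → x ≤ y → y ≤ 1 → G y - G x = ∫ t in x..y, f t := by
    intro x y hx hxy hy
    rw [hG, hG, sub_eq_iff_eq_add, add_comm]
    exact (integral_add_adjacent_intervals (hsub le_rfl hx (le_trans hxy hy))
      (hsub hx hxy hy)).symm
  -- continuity of G on [0,1]
  have hGcont : ContinuousOn G (Set.Icc (0:ℝ) 1) := by
    have h := continuousOn_primitive_interval'
      (μ := volume) (f := f) (b₁ := (0:ℝ)) (b₂ := 1) hint
      (by rw [Set.uIcc_of_le (by norm_num)]; exact ⟨le_rfl, by norm_num⟩)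
    rw [Set.uIcc_of_le (by norm_num : (0:ℝ) ≤ 1)] at h
    exact h.congr (fun x _ => (hG x))
  set B : Set ℝ := Set.Icc (0:ℝ) 1 ∩ G ⁻¹' {c₀} with hBdef
  rcases B.eq_empty_or_nonempty with hB | hB
  · filter_upwards [ae_restrict_mem measurableSet_Icc] with x hx hGx
    exact absurd (by exact ⟨hx, hGx⟩ : x ∈ B) (by rw [hB]; exact Set.notMem_empty x)
  · have hBclosed : IsClosed B := by
      have : B = Set.Icc (0:ℝ) 1 ∩ (fun x => G (max 0 (min 1 x))) ⁻¹' {c₀} := by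
        ext x
        constructor
        · rintro ⟨hx, hGx⟩
          refine ⟨hx, ?_⟩
          simp only [Set.mem_preimage, Set.mem_singleton_iff]
          rw [min_eq_right hx.2, max_eq_right hx.1]; exact hGx
        · rintro ⟨hx, hGx⟩
          refine ⟨hx, ?_⟩
          simp only [Set.mem_preimage, Set.mem_singleton_iff] at hGx ⊢
          rwa [min_eq_right hx.2, max_eq_right hx.1] at hGx
      rw [this]
      have hclamp : Continuous (fun x : ℝ => max 0 (min 1 x)) :=
        continuous_const.max (continuous_const.min continuous_id)
      have hmem : ∀ x : ℝ, max 0 (min 1 x) ∈ Set.Icc (0:ℝ) 1 :=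
        fun x => ⟨le_max_left _ _, max_le (by norm_num) (min_le_left _ _)⟩
      have hGc : Continuous (fun x => G (max 0 (min 1 x))) :=
        hGcont.comp_continuous hclamp hmem
      exact isClosed_Icc.inter (isClosed_singleton.preimage hGc)
    have hBsub : B ⊆ Set.Icc (0:ℝ) 1 := Set.inter_subset_left
    have hBdd : BddAbove B := (bddAbove_Icc).mono hBsub
    have hBddb : BddBelow B := (bddBelow_Icc).mono hBsub
    set p := sInf B with hp
    set q := sSup B with hq
    have hpB : p ∈ B := hBclosed.csInf_mem hB hBddb
    have hqB : q ∈ B := hBclosed.csSup_mem hB hBdd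
    have hpq : p ≤ q := csInf_le_csSup hB hBddb hBdd
    have hp0 : 0 ≤ p := (hBsub hpB).1
    have hq1 : q ≤ 1 := (hBsub hqB).2
    -- integral of f over [p,q] is zero
    have hzero : ∫ x in Set.Icc p q, f x = 0 := by
      rw [MeasureTheory.integral_Icc_eq_integral_Ioc, ← intervalIntegral.integral_of_le hpq,
        ← hGsub hp0 hpq hq1]
      have : G p = c₀ := hpB.2
      have h2 : G q = c₀ := hqB.2
      rw [this, h2, sub_self]
    have hfint : IntegrableOn f (Set.Icc p q) volume :=
      (intervalIntegrable_iff_integrableOn_Icc_of_le hpq).1 (hsub hp0 hpq hq1)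
    have hae : f =ᵐ[volume.restrict (Set.Icc p q)] 0 := by
      refine (MeasureTheory.integral_eq_zero_iff_of_nonneg (fun x => h0 x) hfint).1 hzero
    have hnull : volume ({x | f x ≠ 0} ∩ Set.Icc p q) = 0 := by
      have := hae
      rw [Filter.EventuallyEq, ae_iff] at this
      rw [Measure.restrict_apply' measurableSet_Icc] at this
      simpa using this
    rw [ae_iff, Measure.restrict_apply' measurableSet_Icc]
    refine measure_mono_null ?_ hnull
    intro x hx
    simp only [Set.mem_inter_iff, Set.mem_setOf_eq] at hx ⊢
    push_neg at hx
    obtain ⟨⟨hGx, hfx⟩, hxI⟩ := hx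
    have hxB : x ∈ B := ⟨hxI, hGx⟩
    exact ⟨hfx, le_csInf_iff hBddb hB |>.1 le_rfl x hxB, le_csSup hBdd hxB⟩

/-- Change of variables: pushing forward `f·λ` on `[a,b]` by the primitive `G`. -/
lemma cov_primitive {f : ℝ → ℝ} {a b : ℝ} (hab : a ≤ b)
    (hm : Measurable f) (h0 : ∀ x, 0 ≤ f x)
    (hint : IntervalIntegrable f volume a b)
    {G : ℝ → ℝ} (hG : ∀ x ∈ Set.Icc a b, G x = ∫ t in a..x, f t)
    {g : ℝ → ℝ} (hg : Measurable g)
    (hgint : IntervalIntegrable g volume 0 (G b)) :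
    IntervalIntegrable (fun x => f x * g (G x)) volume a b ∧
    (∫ x in a..b, f x * g (G x)) = ∫ u in (0:ℝ)..(G b), g u := by
  have hsub : ∀ {x y : ℝ}, a ≤ x → x ≤ y → y ≤ b → IntervalIntegrable f volume x y := by
    intro x y hx hxy hy
    exact hint.mono_set (Set.uIcc_subset_uIcc
      (by rw [Set.uIcc_of_le hab]; exact ⟨hx, le_trans hxy hy⟩)
      (by rw [Set.uIcc_of_le hab]; exact ⟨le_trans hx hxy, hy⟩))
  have hGsub : ∀ {x y : ℝ}, a ≤ x → x ≤ y → y ≤ b → G y - G x = ∫ t in x..y, f t := by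
    intro x y hx hxy hy
    rw [hG x ⟨hx, le_trans hxy hy⟩, hG y ⟨le_trans hx hxy, hy⟩, sub_eq_iff_eq_add, add_comm]
    exact (integral_add_adjacent_intervals (hsub le_rfl hx (le_trans hxy hy))
      (hsub hx hxy hy)).symm
  have hGa : G a = 0 := by rw [hG a ⟨le_rfl, hab⟩, intervalIntegral.integral_same]
  have hGmono : ∀ {x y : ℝ}, a ≤ x → x ≤ y → y ≤ b → G x ≤ G y := by
    intro x y hx hxy hy
    have := hGsub hx hxy hy
    nlinarith [intervalIntegral.integral_nonneg (μ := volume) hxy (fun u _ => h0 u)]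
  have hG0 : ∀ x ∈ Set.Icc a b, 0 ≤ G x := by
    intro x hx
    have := hGmono le_rfl hx.1 hx.2
    rwa [hGa] at this
  have hGleb : ∀ x ∈ Set.Icc a b, G x ≤ G b := fun x hx => hGmono hx.1 hx.2 le_rfl
  have hGb0 : 0 ≤ G b := hG0 b ⟨hab, le_rfl⟩
  have hGcont : ContinuousOn G (Set.Icc a b) := by
    have h := continuousOn_primitive_interval'
      (μ := volume) (f := f) (b₁ := a) (b₂ := b) hint
      (by rw [Set.uIcc_of_le hab]; exact ⟨le_rfl, hab⟩)
    rw [Set.uIcc_of_le hab] at h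
    exact h.congr (fun x hx => (hG x hx))
  -- clamped version of G, globally continuous
  set cl : ℝ → ℝ := fun x => max a (min b x) with hcl
  have hclc : Continuous cl := continuous_const.max (continuous_const.min continuous_id)
  have hclmem : ∀ x, cl x ∈ Set.Icc a b :=
    fun x => ⟨le_max_left _ _, max_le hab (min_le_left _ _)⟩
  have hclid : ∀ x ∈ Set.Icc a b, cl x = x := by
    intro x hx; simp only [hcl]; rw [min_eq_right hx.2, max_eq_right hx.1]
  set Gc : ℝ → ℝ := fun x => G (cl x) with hGc
  have hGcc : Continuous Gc := hGcont.comp_continuous hclc hclmem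
  have hGceq : ∀ x ∈ Set.Icc a b, Gc x = G x := fun x hx => by
    simp only [hGc]; rw [hclid x hx]
  -- the density measure
  set ρ : ℝ → ℝ≥0 := fun x => Real.toNNReal (f x) with hρ
  have hρm : Measurable ρ := measurable_real_toNNReal.comp hm
  set μ : Measure ℝ := (volume.restrict (Set.Icc a b)).withDensity (fun x => (ρ x : ℝ≥0∞))
    with hμ
  have hρof : (fun x => ((ρ x : ℝ≥0) : ℝ≥0∞)) = fun x => ENNReal.ofReal (f x) := by
    funext x; simp [hρ, ENNReal.ofReal]
  -- lintegral over subintervals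
  have hlin : ∀ {x y : ℝ}, a ≤ x → x ≤ y → y ≤ b →
      (∫⁻ t in Set.Icc x y, ((ρ t : ℝ≥0∞)) ∂volume) = ENNReal.ofReal (G y - G x) := by
    intro x y hx hxy hy
    have hi : Integrable f (volume.restrict (Set.Icc x y)) :=
      (intervalIntegrable_iff_integrableOn_Icc_of_le hxy).1 (hsub hx hxy hy)
    have := MeasureTheory.ofReal_integral_eq_lintegral_ofReal hi
      (Filter.Eventually.of_forall (fun t => h0 t))
    rw [hρof, ← this, hGsub hx hxy hy, MeasureTheory.integral_Icc_eq_integral_Ioc,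
      ← intervalIntegral.integral_of_le hxy]
  have hμfin : IsFiniteMeasure μ := by
    constructor
    rw [hμ, withDensity_apply _ MeasurableSet.univ, Measure.restrict_restrict MeasurableSet.univ,
      Set.univ_inter]
    rw [hlin le_rfl hab le_rfl]
    exact ENNReal.ofReal_lt_top
  -- the pushforward identity
  have hmap : Measure.map Gc μ = volume.restrict (Set.Icc 0 (G b)) := by
    have : IsFiniteMeasure (Measure.map Gc μ) := Measure.isFiniteMeasure_map μ Gc
    refine Measure.ext_of_Iic _ _ (fun t => ?_)
    rw [Measure.map_apply hGcc.measurable measurableSet_Iic]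
    have hpre : MeasurableSet (Gc ⁻¹' Set.Iic t) := hGcc.measurable measurableSet_Iic
    rw [hμ, withDensity_apply _ hpre, Measure.restrict_restrict hpre,
      Measure.restrict_apply' measurableSet_Icc]
    rcases lt_or_ge t 0 with ht | ht
    · have h1 : Gc ⁻¹' Set.Iic t ∩ Set.Icc a b = ∅ := by
        ext x
        simp only [Set.mem_inter_iff, Set.mem_preimage, Set.mem_Iic, Set.mem_empty_iff_false,
          iff_false, not_and]
        intro hGx hx
        rw [hGceq x hx] at hGx
        exact absurd (le_trans (hG0 x hx) hGx) (not_le.2 ht)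
      have h2 : Set.Iic t ∩ Set.Icc 0 (G b) = ∅ := by
        ext x
        simp only [Set.mem_inter_iff, Set.mem_Iic, Set.mem_Icc, Set.mem_empty_iff_false,
          iff_false, not_and]
        intro hxt hx0 _
        exact absurd (le_trans hx0 hxt) (not_le.2 ht)
      rw [h1, h2]; simp
    rcases le_or_gt (G b) t with ht2 | ht2
    · have h1 : Gc ⁻¹' Set.Iic t ∩ Set.Icc a b = Set.Icc a b := by
        apply Set.inter_eq_right.2
        intro x hx
        simp only [Set.mem_preimage, Set.mem_Iic]
        rw [hGceq x hx]
        exact le_trans (hGleb x hx) ht2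
      have h2 : Set.Iic t ∩ Set.Icc 0 (G b) = Set.Icc 0 (G b) := by
        apply Set.inter_eq_right.2
        intro x hx
        exact le_trans hx.2 ht2
      rw [h1, h2, hlin le_rfl hab le_rfl, hGa, sub_zero, Real.volume_Icc, sub_zero]
    · -- 0 ≤ t < G b
      set S : Set ℝ := Set.Icc a b ∩ Gc ⁻¹' Set.Iic t with hS
      have hSne : S.Nonempty := ⟨a, ⟨le_rfl, hab⟩, by
        simp only [Set.mem_preimage, Set.mem_Iic]
        rw [hGceq a ⟨le_rfl, hab⟩, hGa]; exact ht⟩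
      have hSclosed : IsClosed S := isClosed_Icc.inter (isClosed_Iic.preimage hGcc)
      have hSdd : BddAbove S := bddAbove_Icc.mono Set.inter_subset_left
      set s₀ := sSup S with hs₀
      have hs₀S : s₀ ∈ S := hSclosed.csSup_mem hSne hSdd
      have hs₀I : s₀ ∈ Set.Icc a b := hs₀S.1
      have hGs₀le : G s₀ ≤ t := by
        have := hs₀S.2
        simp only [Set.mem_preimage, Set.mem_Iic] at this
        rwa [hGceq s₀ hs₀I] at this
      have hGs₀ : G s₀ = t := by
        refine le_antisymm hGs₀le ?_
        by_contra hlt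
        push_neg at hlt
        have hmem : t ∈ Set.Icc (G s₀) (G b) := ⟨hlt.le, ht2.le⟩
        obtain ⟨y, hy, hGy⟩ := intermediate_value_Icc hs₀I.2
          (hGcont.mono (Set.Icc_subset_Icc hs₀I.1 le_rfl)) hmem
        have hyI : y ∈ Set.Icc a b := ⟨le_trans hs₀I.1 hy.1, hy.2⟩
        have hyS : y ∈ S := ⟨hyI, by
          simp only [Set.mem_preimage, Set.mem_Iic]
          rw [hGceq y hyI, hGy]⟩
        have : y ≤ s₀ := le_csSup hSdd hyS
        have : G y ≤ G s₀ := hGmono hyI.1 this hs₀I.2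
        rw [hGy] at this
        exact absurd (lt_of_le_of_lt this hlt) (lt_irrefl t)
      have hSeq : Gc ⁻¹' Set.Iic t ∩ Set.Icc a b = Set.Icc a s₀ := by
        ext x
        simp only [Set.mem_inter_iff, Set.mem_preimage, Set.mem_Iic, Set.mem_Icc]
        constructor
        · rintro ⟨hGx, hx1, hx2⟩
          refine ⟨hx1, le_csSup hSdd ⟨⟨hx1, hx2⟩, ?_⟩⟩
          simp only [Set.mem_preimage, Set.mem_Iic]
          exact hGx
        · rintro ⟨hx1, hx2⟩
          have hxI : x ∈ Set.Icc a b := ⟨hx1, le_trans hx2 hs₀I.2⟩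
          refine ⟨?_, hx1, hxI.2⟩
          rw [hGceq x hxI]
          exact le_trans (hGmono hx1 hx2 hs₀I.2) hGs₀le
      have h2 : Set.Iic t ∩ Set.Icc 0 (G b) = Set.Icc 0 t := by
        ext x
        simp only [Set.mem_inter_iff, Set.mem_Iic, Set.mem_Icc]
        constructor
        · rintro ⟨hxt, hx0, _⟩; exact ⟨hx0, hxt⟩
        · rintro ⟨hx0, hxt⟩; exact ⟨hxt, hx0, le_trans hxt ht2.le⟩
      rw [hSeq, h2, hlin le_rfl hs₀I.1 hs₀I.2, hGa, sub_zero, hGs₀, Real.volume_Icc, sub_zero]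
  -- transfer integrability and the integral
  have hgsm : AEStronglyMeasurable g (Measure.map Gc μ) :=
    hg.stronglyMeasurable.aestronglyMeasurable
  have hgint2 : Integrable g (Measure.map Gc μ) := by
    rw [hmap]
    exact (intervalIntegrable_iff_integrableOn_Icc_of_le hGb0).1 hgint
  have hcomp : Integrable (fun x => g (Gc x)) μ :=
    (integrable_map_measure hgsm hGcc.measurable.aemeasurable).1 hgint2
  have hsmul : Integrable (fun x => (ρ x : ℝ) • g (Gc x))
      (volume.restrict (Set.Icc a b)) :=
    (integrable_withDensity_iff_integrable_smul hρm).1 hcomp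
  have hmuleq : Set.EqOn (fun x => (ρ x : ℝ) • g (Gc x)) (fun x => f x * g (G x))
      (Set.Icc a b) := by
    intro x hx
    simp only [smul_eq_mul, hρ, Real.coe_toNNReal _ (h0 x)]
    rw [hGceq x hx]
  have hII : IntervalIntegrable (fun x => f x * g (G x)) volume a b := by
    rw [intervalIntegrable_iff_integrableOn_Icc_of_le hab]
    exact (hsmul.congr ((ae_restrict_iff' measurableSet_Icc).2
      (Filter.Eventually.of_forall (fun x hx => hmuleq hx))))
  refine ⟨hII, ?_⟩
  have h1 : (∫ x in a..b, f x * g (G x))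
      = ∫ x in Set.Icc a b, (ρ x : ℝ) • g (Gc x) := by
    rw [intervalIntegral.integral_of_le hab, ← MeasureTheory.integral_Icc_eq_integral_Ioc]
    exact (setIntegral_congr_fun measurableSet_Icc hmuleq).symm
  have h2 : ∫ x in Set.Icc a b, (ρ x : ℝ) • g (Gc x)
      = ∫ x, g (Gc x) ∂μ := by
    rw [hμ, integral_withDensity_eq_integral_smul hρm]
    simp only [NNReal.smul_def, smul_eq_mul]
  have h3 : ∫ x, g (Gc x) ∂μ = ∫ u, g u ∂(Measure.map Gc μ) :=
    (integral_map hGcc.measurable.aemeasurable hgsm).symm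
  rw [h1, h2, h3, hmap, MeasureTheory.integral_Icc_eq_integral_Ioc,
    ← intervalIntegral.integral_of_le hGb0]

set_option maxHeartbeats 2000000 in
/-- For the perturbed densities `f_j = f₀(1 − γF + γ K∘v_j)`, the squared Hellinger
distance satisfies
`‖√f₁ − √f₂‖₂² = 2F ∫₀¹ (√(1 − γF + γK(u)) − √(1 − γF))² du
  ≥ 2F(1 − γF)(√(1+γ) − 1)²`. -/
theorem stmt18 (f₀ K : ℝ → ℝ) (x₀ x₁ x₂ F γ : ℝ)
    (hf₀m : Measurable f₀) (hf₀0 : ∀ x, 0 ≤ f₀ x)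
    (hf₀int : IntervalIntegrable f₀ volume 0 1)
    (hf₀1 : (∫ x in (0:ℝ)..1, f₀ x) = 1)
    (hKm : Measurable K) (hK0 : ∀ u, 0 ≤ K u)
    (hKsupp : ∀ u, u ∉ Set.Icc (0:ℝ) 1 → K u = 0)
    (hKint : IntervalIntegrable K volume 0 1)
    (hK1 : (∫ u in (0:ℝ)..1, K u) = 1)
    (hx0 : 0 ≤ x₀) (h01 : x₀ ≤ x₁) (h12 : x₁ < x₂) (hx2 : x₂ ≤ 1)
    (hF : 0 < F)
    (hF1 : (∫ x in x₀..x₁, f₀ x) = F) (hF2 : (∫ x in x₁..x₂, f₀ x) = F)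
    (hγ : 0 < γ) (hγF : γ * F < 1)
    (F₀ : ℝ → ℝ) (hF₀ : ∀ x, F₀ x = ∫ t in (0:ℝ)..x, f₀ t)
    (f₁ f₂ : ℝ → ℝ)
    (hf₁ : ∀ x, f₁ x = f₀ x * (1 - γ * F + γ * K ((F₀ x - F₀ x₀) / F)))
    (hf₂ : ∀ x, f₂ x = f₀ x * (1 - γ * F + γ * K ((F₀ x - F₀ x₁) / F))) :
    (∫ x in (0:ℝ)..1, (Real.sqrt (f₁ x) - Real.sqrt (f₂ x))^2)
      = 2 * F * ∫ u in (0:ℝ)..1,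
          (Real.sqrt (1 - γ * F + γ * K u) - Real.sqrt (1 - γ * F))^2 ∧
    2 * F * (1 - γ * F) * (Real.sqrt (1 + γ) - 1)^2
      ≤ ∫ x in (0:ℝ)..1, (Real.sqrt (f₁ x) - Real.sqrt (f₂ x))^2 := by
  have hx11 : x₁ ≤ 1 := le_trans h12.le hx2
  have hx01 : x₀ ≤ 1 := le_trans h01 hx11
  have h0x1 : (0:ℝ) ≤ x₁ := le_trans hx0 h01
  have h0x2 : (0:ℝ) ≤ x₂ := le_trans h0x1 h12.le
  have hc0 : (0:ℝ) < 1 - γ * F := by linarith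
  have hc1 : 1 - γ * F ≤ 1 := by nlinarith
  set c := 1 - γ * F with hcdef
  -- basic facts about f₀ and F₀
  have hsubf : ∀ {x y : ℝ}, 0 ≤ x → x ≤ y → y ≤ 1 → IntervalIntegrable f₀ volume x y := by
    intro x y hx hxy hy
    exact hf₀int.mono_set (Set.uIcc_subset_uIcc
      (by rw [Set.uIcc_of_le (by norm_num)]; exact ⟨hx, le_trans hxy hy⟩)
      (by rw [Set.uIcc_of_le (by norm_num)]; exact ⟨le_trans hx hxy, hy⟩))
  have hF₀sub : ∀ {x y : ℝ}, 0 ≤ x → x ≤ y → y ≤ 1 → F₀ y - F₀ x = ∫ t in x..y, f₀ t := by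
    intro x y hx hxy hy
    rw [hF₀, hF₀, sub_eq_iff_eq_add, add_comm]
    exact (intervalIntegral.integral_add_adjacent_intervals
      (hsubf le_rfl hx (le_trans hxy hy)) (hsubf hx hxy hy)).symm
  have hF₀mono : ∀ {x y : ℝ}, 0 ≤ x → x ≤ y → y ≤ 1 → F₀ x ≤ F₀ y := by
    intro x y hx hxy hy
    have h := hF₀sub hx hxy hy
    nlinarith [intervalIntegral.integral_nonneg (μ := volume) hxy (fun u _ => hf₀0 u)]
  have hFx1 : F₀ x₁ = F₀ x₀ + F := by
    have := hF₀sub hx0 h01 hx11; rw [hF1] at this; linarith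
  have hFx2 : F₀ x₂ = F₀ x₁ + F := by
    have := hF₀sub h0x1 h12.le hx2; rw [hF2] at this; linarith
  -- the function g and its properties
  have hgm : Measurable (fun u => (Real.sqrt (c + γ * K u) - Real.sqrt c)^2) :=
    (((measurable_const.add (hKm.const_mul γ)).sqrt.sub measurable_const).pow_const 2)
  have hkey : ∀ (A B : ℝ), 0 ≤ B → B ≤ A → (Real.sqrt A - Real.sqrt B)^2 ≤ A := by
    intro A B hB hBA
    have h1 : Real.sqrt B ≤ Real.sqrt A := Real.sqrt_le_sqrt hBA
    nlinarith [Real.sq_sqrt hB, Real.sq_sqrt (le_trans hB hBA), Real.sqrt_nonneg B,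
      mul_le_mul_of_nonneg_left h1 (Real.sqrt_nonneg B)]
  have hgpos : ∀ u, (0:ℝ) ≤ (Real.sqrt (c + γ * K u) - Real.sqrt c)^2 := fun u => sq_nonneg _
  have hgle : ∀ u, (Real.sqrt (c + γ * K u) - Real.sqrt c)^2 ≤ c + γ * K u := by
    intro u
    exact hkey _ _ hc0.le (by nlinarith [hK0 u])
  have hcK_int : IntervalIntegrable (fun u => c + γ * K u) volume 0 1 :=
    (_root_.intervalIntegrable_const).add (hKint.const_mul γ)
  have hgint : IntervalIntegrable (fun u => (Real.sqrt (c + γ * K u) - Real.sqrt c)^2)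
      volume 0 1 := by
    apply hcK_int.mono_fun hgm.aestronglyMeasurable
    filter_upwards with u
    rw [Real.norm_eq_abs, Real.norm_eq_abs, abs_of_nonneg (hgpos u),
      abs_of_nonneg (by nlinarith [hK0 u] : (0:ℝ) ≤ c + γ * K u)]
    exact hgle u
  -- composed with division by F
  have hKcomp : IntervalIntegrable (fun u => K (u / F)) volume 0 F := by
    have h := hKint.comp_mul_right (c := F⁻¹)
    simp only [div_eq_mul_inv]
    have h0 : (0:ℝ) / F⁻¹ = 0 := by simp
    have h1 : (1:ℝ) / F⁻¹ = F := by field_simp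
    rwa [h0, h1] at h
  have hgFm : Measurable (fun u => (Real.sqrt (c + γ * K (u / F)) - Real.sqrt c)^2) :=
    hgm.comp (measurable_id.div_const F)
  have hgFint : IntervalIntegrable (fun u => (Real.sqrt (c + γ * K (u / F)) - Real.sqrt c)^2)
      volume 0 F := by
    apply ((_root_.intervalIntegrable_const (c := c)).add (hKcomp.const_mul γ)).mono_fun
      hgFm.aestronglyMeasurable
    filter_upwards with u
    rw [Real.norm_eq_abs, Real.norm_eq_abs, abs_of_nonneg (hgpos _),
      abs_of_nonneg (by nlinarith [hK0 (u / F)] : (0:ℝ) ≤ c + γ * K (u / F))]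
    exact hgle _
  -- change of variables on [x₀, x₁]
  have hGb1 : F₀ x₁ - F₀ x₀ = F := by linarith
  have cov1 := cov_primitive (f := f₀) (a := x₀) (b := x₁) h01 hf₀m hf₀0
    (hsubf hx0 h01 hx11) (G := fun x => F₀ x - F₀ x₀)
    (fun x hx => hF₀sub hx0 hx.1 (le_trans hx.2 hx11))
    (g := fun u => (Real.sqrt (c + γ * K (u / F)) - Real.sqrt c)^2) hgFm
    (by simpa [hGb1] using hgFint)
  have hGb2 : F₀ x₂ - F₀ x₁ = F := by linarith
  have cov2 := cov_primitive (f := f₀) (a := x₁) (b := x₂) h12.le hf₀m hf₀0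
    (hsubf h0x1 h12.le hx2) (G := fun x => F₀ x - F₀ x₁)
    (fun x hx => hF₀sub h0x1 hx.1 (le_trans hx.2 hx2))
    (g := fun u => (Real.sqrt (c + γ * K (u / F)) - Real.sqrt c)^2) hgFm
    (by simpa [hGb2] using hgFint)
  rw [hGb1] at cov1
  rw [hGb2] at cov2
  have hscale : (∫ u in (0:ℝ)..F, (Real.sqrt (c + γ * K (u / F)) - Real.sqrt c)^2)
      = F * ∫ u in (0:ℝ)..1, (Real.sqrt (c + γ * K u) - Real.sqrt c)^2 := by
    rw [intervalIntegral.integral_comp_div (c := F)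
      (f := fun u => (Real.sqrt (c + γ * K u) - Real.sqrt c)^2) hF.ne', zero_div,
      div_self hF.ne', smul_eq_mul]
  -- a.e. vanishing of the density on level sets of F₀
  have hA : ∀ (c₀ : ℝ), ∀ᵐ x ∂(volume : Measure ℝ), x ∈ Set.Icc (0:ℝ) 1 →
      (F₀ x = c₀ → f₀ x = 0) := fun c₀ =>
    (ae_restrict_iff' measurableSet_Icc).1 (levelset_ae hf₀m hf₀0 hf₀int hF₀ c₀)
  -- helper for a.e.-zero interval integrals
  have hzero : ∀ {u v : ℝ} {φ : ℝ → ℝ},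
      (∀ᵐ x ∂(volume : Measure ℝ), x ∈ Set.uIoc u v → φ x = 0) →
      IntervalIntegrable φ volume u v ∧ (∫ x in u..v, φ x) = 0 := by
    intro u v φ h
    have h' : φ =ᵐ[volume.restrict (Set.uIoc u v)] 0 :=
      (ae_restrict_iff' measurableSet_uIoc).2 h
    constructor
    · rw [intervalIntegrable_iff]
      exact (integrable_zero _ _ _).congr h'.symm
    · rw [intervalIntegral.integral_congr_ae
        (g := fun _ => (0:ℝ)) (by filter_upwards [h] with x hx hmem; exact hx hmem)]
      simp
  -- the four vanishing pieces
  have P1a : ∀ᵐ x ∂(volume : Measure ℝ), x ∈ Set.uIoc (0:ℝ) x₀ →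
      f₀ x * (Real.sqrt (c + γ * K ((F₀ x - F₀ x₀) / F)) - Real.sqrt c)^2 = 0 := by
    filter_upwards [hA (F₀ x₀)] with x hx hmem
    rw [Set.uIoc_of_le hx0] at hmem
    have hxI : x ∈ Set.Icc (0:ℝ) 1 := ⟨hmem.1.le, le_trans hmem.2 hx01⟩
    have hle : F₀ x ≤ F₀ x₀ := hF₀mono hmem.1.le hmem.2 hx01
    rcases eq_or_lt_of_le hle with he | hlt
    · rw [hx hxI he, zero_mul]
    · have hdiv : (F₀ x - F₀ x₀) / F < 0 := div_neg_of_neg_of_pos (by linarith) hF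
      rw [hKsupp _ (fun hc => absurd hc.1 (not_le.2 hdiv)), mul_zero, add_zero,
        sub_self, zero_pow (by norm_num), mul_zero]
  have P1c : ∀ᵐ x ∂(volume : Measure ℝ), x ∈ Set.uIoc x₁ 1 →
      f₀ x * (Real.sqrt (c + γ * K ((F₀ x - F₀ x₀) / F)) - Real.sqrt c)^2 = 0 := by
    filter_upwards [hA (F₀ x₁)] with x hx hmem
    rw [Set.uIoc_of_le hx11] at hmem
    have hxI : x ∈ Set.Icc (0:ℝ) 1 := ⟨le_trans h0x1 hmem.1.le, hmem.2⟩
    have hle : F₀ x₁ ≤ F₀ x := hF₀mono h0x1 hmem.1.le hmem.2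
    rcases eq_or_lt_of_le hle with he | hlt
    · rw [hx hxI he.symm, zero_mul]
    · have hdiv : 1 < (F₀ x - F₀ x₀) / F := (one_lt_div hF).2 (by linarith)
      rw [hKsupp _ (fun hc => absurd hc.2 (not_le.2 hdiv)), mul_zero, add_zero,
        sub_self, zero_pow (by norm_num), mul_zero]
  have P2a : ∀ᵐ x ∂(volume : Measure ℝ), x ∈ Set.uIoc (0:ℝ) x₁ →
      f₀ x * (Real.sqrt (c + γ * K ((F₀ x - F₀ x₁) / F)) - Real.sqrt c)^2 = 0 := by
    filter_upwards [hA (F₀ x₁)] with x hx hmem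
    rw [Set.uIoc_of_le h0x1] at hmem
    have hxI : x ∈ Set.Icc (0:ℝ) 1 := ⟨hmem.1.le, le_trans hmem.2 hx11⟩
    have hle : F₀ x ≤ F₀ x₁ := hF₀mono hmem.1.le hmem.2 hx11
    rcases eq_or_lt_of_le hle with he | hlt
    · rw [hx hxI he, zero_mul]
    · have hdiv : (F₀ x - F₀ x₁) / F < 0 := div_neg_of_neg_of_pos (by linarith) hF
      rw [hKsupp _ (fun hc => absurd hc.1 (not_le.2 hdiv)), mul_zero, add_zero,
        sub_self, zero_pow (by norm_num), mul_zero]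
  have P2c : ∀ᵐ x ∂(volume : Measure ℝ), x ∈ Set.uIoc x₂ 1 →
      f₀ x * (Real.sqrt (c + γ * K ((F₀ x - F₀ x₁) / F)) - Real.sqrt c)^2 = 0 := by
    filter_upwards [hA (F₀ x₂)] with x hx hmem
    rw [Set.uIoc_of_le hx2] at hmem
    have hxI : x ∈ Set.Icc (0:ℝ) 1 := ⟨le_trans h0x2 hmem.1.le, hmem.2⟩
    have hle : F₀ x₂ ≤ F₀ x := hF₀mono h0x2 hmem.1.le hmem.2
    rcases eq_or_lt_of_le hle with he | hlt
    · rw [hx hxI he.symm, zero_mul]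
    · have hdiv : 1 < (F₀ x - F₀ x₁) / F := (one_lt_div hF).2 (by linarith)
      rw [hKsupp _ (fun hc => absurd hc.2 (not_le.2 hdiv)), mul_zero, add_zero,
        sub_self, zero_pow (by norm_num), mul_zero]
  have hz1a := hzero P1a
  have hz1c := hzero P1c
  have hz2a := hzero P2a
  have hz2c := hzero P2c
  -- global integrability of the two pieces
  have hI1 : IntervalIntegrable
      (fun x => f₀ x * (Real.sqrt (c + γ * K ((F₀ x - F₀ x₀) / F)) - Real.sqrt c)^2)
      volume 0 1 := hz1a.1.trans (cov1.1.trans hz1c.1)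
  have hI2 : IntervalIntegrable
      (fun x => f₀ x * (Real.sqrt (c + γ * K ((F₀ x - F₀ x₁) / F)) - Real.sqrt c)^2)
      volume 0 1 := hz2a.1.trans (cov2.1.trans hz2c.1)
  -- value of the two pieces
  have hV1 : (∫ x in (0:ℝ)..1,
      f₀ x * (Real.sqrt (c + γ * K ((F₀ x - F₀ x₀) / F)) - Real.sqrt c)^2)
      = F * ∫ u in (0:ℝ)..1, (Real.sqrt (c + γ * K u) - Real.sqrt c)^2 := by
    rw [← intervalIntegral.integral_add_adjacent_intervals hz1a.1 (cov1.1.trans hz1c.1),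
      ← intervalIntegral.integral_add_adjacent_intervals cov1.1 hz1c.1,
      hz1a.2, hz1c.2, cov1.2, hscale]
    ring
  have hV2 : (∫ x in (0:ℝ)..1,
      f₀ x * (Real.sqrt (c + γ * K ((F₀ x - F₀ x₁) / F)) - Real.sqrt c)^2)
      = F * ∫ u in (0:ℝ)..1, (Real.sqrt (c + γ * K u) - Real.sqrt c)^2 := by
    rw [← intervalIntegral.integral_add_adjacent_intervals hz2a.1 (cov2.1.trans hz2c.1),
      ← intervalIntegral.integral_add_adjacent_intervals cov2.1 hz2c.1,
      hz2a.2, hz2c.2, cov2.2, hscale]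
    ring
  -- the pointwise algebraic identity
  have halg : ∀ (A p q : ℝ), 0 ≤ A → 0 ≤ p → 0 ≤ q →
      (Real.sqrt (A * p) - Real.sqrt (A * q))^2
        = A * (Real.sqrt p - Real.sqrt q)^2 := by
    intro A p q hA hp hq
    rw [Real.sqrt_mul hA, Real.sqrt_mul hA, ← mul_sub, mul_pow, Real.sq_sqrt hA]
  -- a.e. splitting identity
  have hmain : ∀ᵐ x ∂(volume : Measure ℝ), x ∈ Set.uIoc (0:ℝ) 1 →
      (Real.sqrt (f₁ x) - Real.sqrt (f₂ x))^2
        = f₀ x * (Real.sqrt (c + γ * K ((F₀ x - F₀ x₀) / F)) - Real.sqrt c)^2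
          + f₀ x * (Real.sqrt (c + γ * K ((F₀ x - F₀ x₁) / F)) - Real.sqrt c)^2 := by
    filter_upwards [hA (F₀ x₁)] with x hx hmem
    rw [Set.uIoc_of_le (by norm_num : (0:ℝ) ≤ 1)] at hmem
    have hxI : x ∈ Set.Icc (0:ℝ) 1 := ⟨hmem.1.le, hmem.2⟩
    have hp0 : (0:ℝ) ≤ c + γ * K ((F₀ x - F₀ x₀) / F) := by nlinarith [hK0 ((F₀ x - F₀ x₀) / F)]
    have hq0 : (0:ℝ) ≤ c + γ * K ((F₀ x - F₀ x₁) / F) := by nlinarith [hK0 ((F₀ x - F₀ x₁) / F)]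
    rcases eq_or_ne (f₀ x) 0 with h0 | h0
    · rw [hf₁, hf₂, h0, zero_mul, zero_mul, zero_mul, zero_mul, Real.sqrt_zero, sub_self,
        zero_pow (by norm_num), add_zero]
    · have hone : K ((F₀ x - F₀ x₀) / F) = 0 ∨ K ((F₀ x - F₀ x₁) / F) = 0 := by
        by_contra hcon
        push_neg at hcon
        have hm1 : (F₀ x - F₀ x₀) / F ∈ Set.Icc (0:ℝ) 1 := by
          by_contra hn; exact hcon.1 (hKsupp _ hn)
        have hm2 : (F₀ x - F₀ x₁) / F ∈ Set.Icc (0:ℝ) 1 := by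
          by_contra hn; exact hcon.2 (hKsupp _ hn)
        have h1' : F₀ x ≤ F₀ x₁ := by
          have := (div_le_one hF).1 hm1.2; linarith
        have h2' : F₀ x₁ ≤ F₀ x := by
          nlinarith [hm2.1, div_mul_cancel₀ (F₀ x - F₀ x₁) hF.ne']
        exact h0 (hx hxI (le_antisymm h1' h2'))
      rcases hone with hk | hk
      · rw [hf₁, hf₂, hk, mul_zero, add_zero,
          halg (f₀ x) c _ (hf₀0 x) hc0.le hq0, sub_self, zero_pow (by norm_num), mul_zero,
          zero_add]
        ring
      · rw [hf₁, hf₂, hk, mul_zero, add_zero,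
          halg (f₀ x) _ c (hf₀0 x) hp0 hc0.le, sub_self, zero_pow (by norm_num), mul_zero,
          add_zero]
  -- the equality
  have hEq : (∫ x in (0:ℝ)..1, (Real.sqrt (f₁ x) - Real.sqrt (f₂ x))^2)
      = 2 * F * ∫ u in (0:ℝ)..1, (Real.sqrt (c + γ * K u) - Real.sqrt c)^2 := by
    rw [intervalIntegral.integral_congr_ae hmain, intervalIntegral.integral_add hI1 hI2,
      hV1, hV2]
    ring
  refine ⟨hEq, ?_⟩
  rw [hEq]
  -- the lower bound
  have h1K : ∀ u, (1:ℝ) ≤ 1 + γ * K u := fun u => by nlinarith [hK0 u]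
  have hhint : IntervalIntegrable (fun u => 1 + γ * K u) volume 0 1 :=
    (_root_.intervalIntegrable_const).add (hKint.const_mul γ)
  have hsqm : Measurable (fun u => Real.sqrt (1 + γ * K u)) :=
    (measurable_const.add (hKm.const_mul γ)).sqrt
  have hsqint : IntervalIntegrable (fun u => Real.sqrt (1 + γ * K u)) volume 0 1 := by
    apply hhint.mono_fun hsqm.aestronglyMeasurable
    filter_upwards with u
    rw [Real.norm_eq_abs, Real.norm_eq_abs, abs_of_nonneg (Real.sqrt_nonneg _),
      abs_of_nonneg (by nlinarith [hK0 u] : (0:ℝ) ≤ 1 + γ * K u)]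
    nlinarith [Real.sq_sqrt (by nlinarith [hK0 u] : (0:ℝ) ≤ 1 + γ * K u),
      Real.one_le_sqrt.2 (h1K u), Real.sqrt_nonneg (1 + γ * K u)]
  have hg1m : Measurable (fun u => (Real.sqrt (1 + γ * K u) - 1)^2) :=
    ((hsqm.sub measurable_const).pow_const 2)
  have hg1int : IntervalIntegrable (fun u => (Real.sqrt (1 + γ * K u) - 1)^2) volume 0 1 := by
    apply hhint.mono_fun hg1m.aestronglyMeasurable
    filter_upwards with u
    rw [Real.norm_eq_abs, Real.norm_eq_abs, abs_of_nonneg (sq_nonneg _),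
      abs_of_nonneg (by nlinarith [hK0 u] : (0:ℝ) ≤ 1 + γ * K u)]
    have := hkey (1 + γ * K u) 1 (by norm_num) (h1K u)
    rwa [Real.sqrt_one] at this
  -- pointwise comparison
  have hcomp : ∀ u ∈ Set.Icc (0:ℝ) 1,
      c * (Real.sqrt (1 + γ * K u) - 1)^2
        ≤ (Real.sqrt (c + γ * K u) - Real.sqrt c)^2 := by
    intro u _
    have h1 : Real.sqrt (c * (1 + γ * K u)) ≤ Real.sqrt (c + γ * K u) :=
      Real.sqrt_le_sqrt (by
        nlinarith [hK0 u, mul_nonneg (mul_nonneg (by linarith : (0:ℝ) ≤ 1 - c) hγ.le) (hK0 u)])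
    rw [Real.sqrt_mul hc0.le] at h1
    have h2 : Real.sqrt c ≤ Real.sqrt c * Real.sqrt (1 + γ * K u) := by
      nlinarith [Real.one_le_sqrt.2 (h1K u), Real.sqrt_nonneg c]
    have h3 : Real.sqrt c * Real.sqrt (1 + γ * K u) - Real.sqrt c
        ≤ Real.sqrt (c + γ * K u) - Real.sqrt c := by linarith
    have h4 : (Real.sqrt c * Real.sqrt (1 + γ * K u) - Real.sqrt c)^2
        ≤ (Real.sqrt (c + γ * K u) - Real.sqrt c)^2 := by
      apply pow_le_pow_left₀ (by linarith) h3
    calc c * (Real.sqrt (1 + γ * K u) - 1)^2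
        = (Real.sqrt c * Real.sqrt (1 + γ * K u) - Real.sqrt c)^2 := by
          rw [show Real.sqrt c * Real.sqrt (1 + γ * K u) - Real.sqrt c
              = Real.sqrt c * (Real.sqrt (1 + γ * K u) - 1) by ring, mul_pow,
            Real.sq_sqrt hc0.le]
      _ ≤ _ := h4
  have hstep1 : c * (∫ u in (0:ℝ)..1, (Real.sqrt (1 + γ * K u) - 1)^2)
      ≤ ∫ u in (0:ℝ)..1, (Real.sqrt (c + γ * K u) - Real.sqrt c)^2 := by
    rw [← intervalIntegral.integral_const_mul]
    exact intervalIntegral.integral_mono_on (by norm_num) (hg1int.const_mul c) hgint hcomp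
  -- Cauchy–Schwarz bound on the integral of the square root
  set I := ∫ u in (0:ℝ)..1, Real.sqrt (1 + γ * K u) with hIdef
  have hInn : 0 ≤ I := intervalIntegral.integral_nonneg (by norm_num)
    (fun u _ => Real.sqrt_nonneg _)
  have hint_h : (∫ u in (0:ℝ)..1, (1 + γ * K u)) = 1 + γ := by
    rw [intervalIntegral.integral_add _root_.intervalIntegrable_const (hKint.const_mul γ),
      intervalIntegral.integral_const_mul, hK1, intervalIntegral.integral_const]
    simp
  have hI2 : I^2 ≤ 1 + γ := by
    have hexp : (∫ u in (0:ℝ)..1, (Real.sqrt (1 + γ * K u) - I)^2) = (1 + γ) - I^2 := by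
      have hcongr : Set.EqOn (fun u => (Real.sqrt (1 + γ * K u) - I)^2)
          (fun u => (1 + γ * K u) - (2 * I) * Real.sqrt (1 + γ * K u) + I^2)
          (Set.uIcc (0:ℝ) 1) := by
        intro u _
        have h := Real.sq_sqrt (by nlinarith [hK0 u] : (0:ℝ) ≤ 1 + γ * K u)
        simp only
        nlinarith [h]
      rw [intervalIntegral.integral_congr hcongr,
        intervalIntegral.integral_add (hhint.sub (hsqint.const_mul (2 * I)))
          _root_.intervalIntegrable_const,
        intervalIntegral.integral_sub hhint (hsqint.const_mul (2 * I)),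
        intervalIntegral.integral_const_mul, hint_h, ← hIdef,
        intervalIntegral.integral_const]
      simp; ring
    have hnn : 0 ≤ ∫ u in (0:ℝ)..1, (Real.sqrt (1 + γ * K u) - I)^2 :=
      intervalIntegral.integral_nonneg (by norm_num) (fun u _ => sq_nonneg _)
    linarith [hexp ▸ hnn]
  have hIle : I ≤ Real.sqrt (1 + γ) :=
    (Real.le_sqrt hInn (by nlinarith)).2 hI2
  have hstep2 : (Real.sqrt (1 + γ) - 1)^2
      ≤ ∫ u in (0:ℝ)..1, (Real.sqrt (1 + γ * K u) - 1)^2 := by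
    have hcongr : Set.EqOn (fun u => (Real.sqrt (1 + γ * K u) - 1)^2)
        (fun u => (1 + γ * K u) - (2 : ℝ) * Real.sqrt (1 + γ * K u) + 1)
        (Set.uIcc (0:ℝ) 1) := by
      intro u _
      have h := Real.sq_sqrt (by nlinarith [hK0 u] : (0:ℝ) ≤ 1 + γ * K u)
      simp only
      nlinarith [h]
    rw [intervalIntegral.integral_congr hcongr,
      intervalIntegral.integral_add (hhint.sub (hsqint.const_mul 2))
        _root_.intervalIntegrable_const,
      intervalIntegral.integral_sub hhint (hsqint.const_mul 2),
      intervalIntegral.integral_const_mul, hint_h, ← hIdef,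
      intervalIntegral.integral_const]
    have hs := Real.sq_sqrt (by nlinarith : (0:ℝ) ≤ 1 + γ)
    simp only [smul_eq_mul, sub_zero, one_mul]
    nlinarith [hIle]
  have hfin : c * (Real.sqrt (1 + γ) - 1)^2
      ≤ ∫ u in (0:ℝ)..1, (Real.sqrt (c + γ * K u) - Real.sqrt c)^2 := by
    calc c * (Real.sqrt (1 + γ) - 1)^2
        ≤ c * ∫ u in (0:ℝ)..1, (Real.sqrt (1 + γ * K u) - 1)^2 :=
          mul_le_mul_of_nonneg_left hstep2 hc0.le
      _ ≤ _ := hstep1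
  calc 2 * F * c * (Real.sqrt (1 + γ) - 1)^2
      = 2 * F * (c * (Real.sqrt (1 + γ) - 1)^2) := by ring
    _ ≤ 2 * F * ∫ u in (0:ℝ)..1, (Real.sqrt (c + γ * K u) - Real.sqrt c)^2 :=
        mul_le_mul_of_nonneg_left hfin (by nlinarith)
end
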